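/- arXiv:1803.08404 — 5 statements merged into one kernel-verified Lean document; each statement's English description precedes it below -/
import Mathlib

section
/- For each n ≥ 1 let X_n = Z_n^{(1)} and Y_n = Z_n^{(-1)} be the Chu sequences of length n with parameters 1 and -1. There exists an absolute constant c > 0 such that |CDF(X_n, Y_n) − 1| ≤ c·n^{-1/6} for all n ≥ 1; in particular CDF(X_n, Y_n) → 1 as n → ∞. -/
open Complex Real Filter Topology

noncomputable section

/-- Zero-extension of a (length `n`) sequence to all of `ℤ`: entries outside
`{0, ..., n-1}` are set to `0`. -/
def seqExt (n : ℕ) (A : ℤ → ℂ) : ℤ → ℂ := fun j => if 0 ≤ j ∧ j < (n : ℤ) then A j else 0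

/-- Aperiodic crosscorrelation of two sequences of length `n` at shift `u`:
`C_{A,B}(u) = ∑_{j ∈ ℤ} a_j * conj (b_{j+u})`.  Since the zero-extended entries
vanish outside `{0, ..., n-1}`, the sum over `ℤ` equals the sum over that range. -/
def corr (n : ℕ) (A B : ℤ → ℂ) (u : ℤ) : ℂ :=
  ∑ j ∈ Finset.Icc (0 : ℤ) ((n : ℤ) - 1), seqExt n A j * (starRingEnd ℂ) (seqExt n B (j + u))

/-- Crosscorrelation demerit factor `CDF(A,B)`.  The correlations vanish for
`|u| ≥ n`, so the sum over all `u ∈ ℤ` equals the sum over `-(n-1) ≤ u ≤ n-1`. -/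
def cdf (n : ℕ) (A B : ℤ → ℂ) : ℝ :=
  (∑ u ∈ Finset.Icc (-(n : ℤ) + 1) ((n : ℤ) - 1), ‖corr n A B u‖ ^ 2) /
    (‖corr n A A 0‖ * ‖corr n B B 0‖)

/-- Autocorrelation demerit factor `ADF(A)`. -/
def adf (n : ℕ) (A : ℤ → ℂ) : ℝ :=
  (∑ u ∈ Finset.Icc (-(n : ℤ) + 1) ((n : ℤ) - 1) \ {0}, ‖corr n A A u‖ ^ 2) /
    ‖corr n A A 0‖ ^ 2

/-- Pursley-Sarwate criterion `PSC(A,B)`. -/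
def psc (n : ℕ) (A B : ℤ → ℂ) : ℝ := Real.sqrt (adf n A * adf n B) + cdf n A B

/-- The Chu sequence of length `n` with parameter `a`: `z_j = exp(π i a j² / n)`. -/
def chu (n : ℕ) (a : ℤ) : ℤ → ℂ :=
  fun j => Complex.exp (Real.pi * Complex.I * (a : ℂ) * (j : ℂ) ^ 2 / (n : ℂ))

/-- Generalised Gauss sum `S_N(x, θ) = ∑_{j=1}^N exp(π i x j² + 2 π i θ j)`. -/
def gSum (N : ℕ) (x θ : ℝ) : ℂ :=
  ∑ j ∈ Finset.Icc 1 N,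
    Complex.exp (Real.pi * Complex.I * (x : ℂ) * (j : ℂ) ^ 2 +
      2 * Real.pi * Complex.I * (θ : ℂ) * (j : ℂ))

/-! ### Auxiliary lemmas -/

lemma seqExt_eq_zero {n : ℕ} {A : ℤ → ℂ} {j : ℤ} (h : j ∉ Finset.Icc (0 : ℤ) ((n:ℤ)-1)) :
    seqExt n A j = 0 := by
  simp only [Finset.mem_Icc, not_and_or, not_le] at h
  unfold seqExt; rw [if_neg]; omega

lemma seqExt_eq_of_mem {n : ℕ} {A : ℤ → ℂ} {j : ℤ} (h : j ∈ Finset.Icc (0 : ℤ) ((n:ℤ)-1)) :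
    seqExt n A j = A j := by
  simp only [Finset.mem_Icc] at h
  unfold seqExt; rw [if_pos]; omega

lemma chu_eq (n : ℕ) (a : ℤ) (j : ℤ) :
    chu n a j = Complex.exp (((Real.pi * a * j^2 / n : ℝ) : ℂ) * Complex.I) := by
  unfold chu; congr 1; push_cast; ring

lemma abs_chu (n : ℕ) (a : ℤ) (j : ℤ) : ‖chu n a j‖ = 1 := by
  rw [chu_eq]; exact Complex.norm_exp_ofReal_mul_I _

lemma chu_neg_conj (n : ℕ) (j : ℤ) : chu n (-1) j = (starRingEnd ℂ) (chu n 1 j) := by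
  rw [chu_eq, chu_eq, ← Complex.exp_conj]
  congr 1
  rw [map_mul, Complex.conj_I, Complex.conj_ofReal]
  push_cast; ring

lemma seqExt_chu_neg_conj (n : ℕ) (j : ℤ) :
    seqExt n (chu n (-1)) j = (starRingEnd ℂ) (seqExt n (chu n 1) j) := by
  unfold seqExt
  split
  · exact chu_neg_conj n j
  · simp

lemma corr_chu_neg (n : ℕ) (d : ℤ) :
    corr n (chu n (-1)) (chu n (-1)) d = (starRingEnd ℂ) (corr n (chu n 1) (chu n 1) d) := by
  unfold corr
  rw [map_sum]
  refine Finset.sum_congr rfl fun j _ => ?_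
  rw [seqExt_chu_neg_conj, seqExt_chu_neg_conj, map_mul, Complex.conj_conj]

lemma corr_chu_self_zero (n : ℕ) (a : ℤ) : corr n (chu n a) (chu n a) 0 = (n : ℂ) := by
  unfold corr
  have : ∀ j ∈ Finset.Icc (0 : ℤ) ((n:ℤ)-1),
      seqExt n (chu n a) j * (starRingEnd ℂ) (seqExt n (chu n a) (j + 0)) = 1 := by
    intro j hj
    rw [add_zero, seqExt_eq_of_mem hj, Complex.mul_conj, ← Complex.sq_norm, abs_chu]
    norm_num
  rw [Finset.sum_congr rfl this, Finset.sum_const, Int.card_Icc]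
  simp

/-- The key rearrangement identity: the sum of `|C_{A,B}(u)|²` over all shifts equals
the correlation of the autocorrelations. -/
lemma corr_fubini (n : ℕ) (A B : ℤ → ℂ) :
    ∑ u ∈ Finset.Icc (-(n:ℤ)+1) ((n:ℤ)-1), corr n A B u * (starRingEnd ℂ) (corr n A B u)
    = ∑ d ∈ Finset.Icc (-(n:ℤ)+1) ((n:ℤ)-1), corr n A A d * (starRingEnd ℂ) (corr n B B d) := by
  classical
  set I : Finset ℤ := Finset.Icc (0 : ℤ) ((n:ℤ)-1) with hI
  set U : Finset ℤ := Finset.Icc (-(n:ℤ)+1) ((n:ℤ)-1) with hU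
  set a : ℤ → ℂ := seqExt n A with ha
  set b : ℤ → ℂ := seqExt n B with hb
  set F : ℤ × ℤ × ℤ → ℂ := fun p =>
    (a p.2.1 * (starRingEnd ℂ) (b (p.2.1 + p.1))) *
      (starRingEnd ℂ) (a p.2.2 * (starRingEnd ℂ) (b (p.2.2 + p.1))) with hF
  set G : ℤ × ℤ × ℤ → ℂ := fun p =>
    (a p.2.1 * (starRingEnd ℂ) (a (p.2.1 + p.1))) *
      (starRingEnd ℂ) (b p.2.2 * (starRingEnd ℂ) (b (p.2.2 + p.1))) with hG
  have hLHS : ∑ u ∈ U, corr n A B u * (starRingEnd ℂ) (corr n A B u)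
      = ∑ p ∈ U ×ˢ I ×ˢ I, F p := by
    rw [Finset.sum_product]
    refine Finset.sum_congr rfl fun u _ => ?_
    rw [Finset.sum_product]
    unfold corr
    rw [map_sum, Finset.sum_mul_sum]
  have hRHS : ∑ d ∈ U, corr n A A d * (starRingEnd ℂ) (corr n B B d)
      = ∑ p ∈ U ×ˢ I ×ˢ I, G p := by
    rw [Finset.sum_product]
    refine Finset.sum_congr rfl fun d _ => ?_
    rw [Finset.sum_product]
    unfold corr
    rw [map_sum, Finset.sum_mul_sum]
  rw [hLHS, hRHS]
  have hFz : ∀ p ∈ U ×ˢ I ×ˢ I, F p ≠ 0 → (p.2.1 + p.1 ∈ I ∧ p.2.2 + p.1 ∈ I) := by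
    intro p _ hp
    by_contra hc
    rw [not_and_or] at hc
    rcases hc with hc | hc
    · exact hp (by simp [hF, hb, seqExt_eq_zero hc])
    · exact hp (by simp [hF, hb, seqExt_eq_zero hc])
  have hGz : ∀ p ∈ U ×ˢ I ×ˢ I, G p ≠ 0 → (p.2.1 + p.1 ∈ I ∧ p.2.2 + p.1 ∈ I) := by
    intro p _ hp
    by_contra hc
    rw [not_and_or] at hc
    rcases hc with hc | hc
    · exact hp (by simp [hG, ha, seqExt_eq_zero hc])
    · exact hp (by simp [hG, hb, seqExt_eq_zero hc])
  rw [← Finset.sum_filter_of_ne hFz, ← Finset.sum_filter_of_ne hGz]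
  refine Finset.sum_nbij' (fun p => (p.2.2 - p.2.1, p.2.1, p.2.1 + p.1))
    (fun p => (p.2.2 - p.2.1, p.2.1, p.2.1 + p.1)) ?_ ?_ ?_ ?_ ?_
  · intro p hp
    simp only [Finset.mem_filter, Finset.mem_product, Finset.mem_Icc, hI, hU] at hp ⊢
    omega
  · intro p hp
    simp only [Finset.mem_filter, Finset.mem_product, Finset.mem_Icc, hI, hU] at hp ⊢
    omega
  · intro p _
    obtain ⟨u, j, k⟩ := p
    simp only [Prod.mk.injEq]
    refine ⟨by ring, trivial, by ring⟩
  · intro p _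
    obtain ⟨u, j, k⟩ := p
    simp only [Prod.mk.injEq]
    refine ⟨by ring, trivial, by ring⟩
  · intro p hp
    simp only [hF, hG, map_mul, Complex.conj_conj]
    have h1 : p.2.1 + (p.2.2 - p.2.1) = p.2.2 := by ring
    have h2 : p.2.1 + p.1 + (p.2.2 - p.2.1) = p.2.2 + p.1 := by ring
    rw [h1, h2]
    ring

lemma corr_neg (n : ℕ) (A : ℤ → ℂ) (d : ℤ) :
    corr n A A (-d) = (starRingEnd ℂ) (corr n A A d) := by
  classical
  unfold corr
  rw [map_sum]
  have hL : ∀ j ∈ Finset.Icc (0:ℤ) ((n:ℤ)-1),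
      seqExt n A j * (starRingEnd ℂ) (seqExt n A (j + -d)) ≠ 0 →
        j + -d ∈ Finset.Icc (0:ℤ) ((n:ℤ)-1) := by
    intro j _ hne
    by_contra hc
    exact hne (by rw [seqExt_eq_zero hc]; simp)
  have hR : ∀ j ∈ Finset.Icc (0:ℤ) ((n:ℤ)-1),
      (starRingEnd ℂ) (seqExt n A j * (starRingEnd ℂ) (seqExt n A (j + d))) ≠ 0 →
        j + d ∈ Finset.Icc (0:ℤ) ((n:ℤ)-1) := by
    intro j _ hne
    by_contra hc
    exact hne (by rw [seqExt_eq_zero hc]; simp)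
  rw [← Finset.sum_filter_of_ne hL, ← Finset.sum_filter_of_ne hR]
  refine Finset.sum_nbij' (fun j => j + -d) (fun j => j + d) ?_ ?_ ?_ ?_ ?_
  · intro j hj
    simp only [Finset.mem_filter, Finset.mem_Icc] at hj ⊢
    omega
  · intro j hj
    simp only [Finset.mem_filter, Finset.mem_Icc] at hj ⊢
    omega
  · intro j _; omega
  · intro j _; omega
  · intro j hj
    rw [map_mul, Complex.conj_conj, show j + -d + d = j by ring]
    ring

/-- `|e^{iθ} - 1| = 2|sin(θ/2)|`. -/
lemma abs_exp_mul_I_sub_one (θ : ℝ) :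
    ‖Complex.exp ((θ:ℂ) * Complex.I) - 1‖ = 2 * |Real.sin (θ/2)| := by
  have pyth : ((Real.sin (θ/2) : ℂ))^2 + ((Real.cos (θ/2) : ℂ))^2 = 1 := by
    norm_cast; exact Real.sin_sq_add_cos_sq _
  have e2 : Complex.exp (((θ/2 : ℝ):ℂ) * Complex.I)
      = (Real.cos (θ/2) : ℂ) + (Real.sin (θ/2) : ℂ) * Complex.I := by
    rw [Complex.exp_mul_I, Complex.ofReal_cos, Complex.ofReal_sin]
  have h : Complex.exp ((θ:ℂ) * Complex.I) - 1
      = Complex.exp (((θ/2 : ℝ):ℂ) * Complex.I) * (2 * (Real.sin (θ/2) : ℂ) * Complex.I) := by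
    have e1 : (θ:ℂ) * Complex.I = ((θ/2:ℝ):ℂ) * Complex.I + ((θ/2:ℝ):ℂ) * Complex.I := by
      push_cast; ring
    rw [e1, Complex.exp_add, e2]
    linear_combination (-(Real.sin (θ/2) : ℂ)^2) * Complex.I_sq + pyth
  rw [h, norm_mul, Complex.norm_exp_ofReal_mul_I, one_mul, norm_mul, norm_mul,
    Complex.norm_two, Complex.norm_I, Complex.norm_real, Real.norm_eq_abs, mul_one]

lemma sum_Icc_int_eq_range (m : ℕ) (f : ℤ → ℂ) :
    ∑ j ∈ Finset.Icc (0:ℤ) ((m:ℤ)-1), f j = ∑ i ∈ Finset.range m, f (i:ℤ) := by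
  refine Finset.sum_nbij' (fun j => j.toNat) (fun i => (i:ℤ)) ?_ ?_ ?_ ?_ ?_
  · intro j hj; simp only [Finset.mem_Icc] at hj; simp only [Finset.mem_range]; omega
  · intro i hi; simp only [Finset.mem_range] at hi; simp only [Finset.mem_Icc]; omega
  · intro j hj; simp only [Finset.mem_Icc] at hj; omega
  · intro i _; simp
  · intro j hj; simp only [Finset.mem_Icc] at hj; congr 1; omega

/-- Exact magnitude of the Chu autocorrelation. -/
lemma abs_corr_chu (n : ℕ) (d : ℤ) (hd1 : 1 ≤ d) (hd2 : d ≤ (n:ℤ) - 1) :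
    ‖corr n (chu n 1) (chu n 1) d‖
      = |Real.sin (π * (d:ℝ)^2 / n)| / Real.sin (π * (d:ℝ) / n) := by
  have hn : 1 ≤ n := by omega
  have hn0 : (n:ℝ) ≠ 0 := by positivity
  have hnC : (n:ℂ) ≠ 0 := by exact_mod_cast hn0
  set m : ℕ := ((n:ℤ) - d).toNat with hmdef
  have hm : ((m:ℕ):ℤ) = (n:ℤ) - d := Int.toNat_of_nonneg (by omega)
  have hmR : ((m:ℕ):ℝ) = (n:ℝ) - (d:ℝ) := by exact_mod_cast hm
  set w : ℂ := ((-(2*π*(d:ℝ)/n) : ℝ):ℂ) * Complex.I with hw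
  set q : ℂ := Complex.exp w with hq
  set c : ℂ := ((-(π*(d:ℝ)^2/n) : ℝ):ℂ) * Complex.I with hc
  have step1 : corr n (chu n 1) (chu n 1) d
      = ∑ j ∈ Finset.Icc (0:ℤ) ((m:ℤ)-1),
        chu n 1 j * (starRingEnd ℂ) (chu n 1 (j+d)) := by
    unfold corr
    rw [← Finset.sum_subset (Finset.Icc_subset_Icc_right (by omega : (m:ℤ)-1 ≤ (n:ℤ)-1))]
    · refine Finset.sum_congr rfl fun j hj => ?_
      simp only [Finset.mem_Icc] at hj
      rw [seqExt_eq_of_mem (by simp only [Finset.mem_Icc]; omega),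
        seqExt_eq_of_mem (by simp only [Finset.mem_Icc]; omega)]
    · intro j hj hj'
      simp only [Finset.mem_Icc] at hj hj'
      rw [seqExt_eq_zero (n := n) (j := j + d) (by simp only [Finset.mem_Icc]; omega)]
      simp
  have step2 : ∀ i : ℕ, chu n 1 (i:ℤ) * (starRingEnd ℂ) (chu n 1 ((i:ℤ)+d))
      = Complex.exp c * q ^ i := by
    intro i
    rw [chu_eq, chu_eq, ← Complex.exp_conj, ← Complex.exp_add, hq, hw, ← Complex.exp_nat_mul,
      ← Complex.exp_add, hc]
    congr 1
    rw [map_mul, Complex.conj_ofReal, Complex.conj_I]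
    push_cast
    field_simp
    ring
  have step3 : corr n (chu n 1) (chu n 1) d = Complex.exp c * ((q ^ m - 1)/(q - 1)) := by
    rw [step1, sum_Icc_int_eq_range]
    have : ∀ i ∈ Finset.range m, chu n 1 (i:ℤ) * (starRingEnd ℂ) (chu n 1 ((i:ℤ)+d))
        = Complex.exp c * q ^ i := fun i _ => step2 i
    rw [Finset.sum_congr rfl this, ← Finset.mul_sum]
    congr 1
    apply geom_sum_eq
    intro hq1
    rw [hq, Complex.exp_eq_one_iff] at hq1
    obtain ⟨k, hk⟩ := hq1
    have hpi : (0:ℝ) < π := Real.pi_pos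
    have hk' : ((-(2*π*(d:ℝ)/n) : ℝ):ℂ) * Complex.I = ((2*π*(k:ℝ) : ℝ):ℂ) * Complex.I := by
      rw [hw] at hk
      rw [hk]
      push_cast
      ring
    have hx : -(2*π*(d:ℝ)/n) = 2*π*(k:ℝ) :=
      Complex.ofReal_inj.mp (mul_right_cancel₀ Complex.I_ne_zero hk')
    have hx2 : (2*π) * (-(d:ℝ)) = (2*π) * ((k:ℝ)*n) := by
      field_simp at hx
      rw [hx]; ring
    have hx3 : -(d:ℝ) = (k:ℝ)*n := mul_left_cancel₀ (by positivity) hx2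
    have hdz : -d = k * (n:ℤ) := by exact_mod_cast hx3
    rcases le_or_gt k (-1) with hk0 | hk0
    · have h2 : (1:ℤ)*(n:ℤ) ≤ (-k)*(n:ℤ) := by
        apply mul_le_mul_of_nonneg_right (by omega) (by omega)
      rw [one_mul, neg_mul] at h2
      linarith
    · have hk0' : 0 ≤ k := by omega
      have h2 : 0 ≤ k*(n:ℤ) := mul_nonneg hk0' (by omega)
      linarith
  have hqm : q ^ m = Complex.exp (((2*π*(d:ℝ)^2/n : ℝ):ℂ) * Complex.I) := by
    rw [hq, ← Complex.exp_nat_mul]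
    have hmC : ((m:ℕ):ℂ) = (n:ℂ) - (d:ℂ) := by exact_mod_cast hm
    have : ((m:ℕ):ℂ) * w
        = ((2*π*(d:ℝ)^2/n : ℝ):ℂ) * Complex.I + ((-d : ℤ):ℂ) * (2*(π:ℂ)*Complex.I) := by
      rw [hw, hmC]
      push_cast
      field_simp [hnC]
      ring
    rw [this, Complex.exp_add, Complex.exp_int_mul_two_pi_mul_I, mul_one]
  have habsqm : ‖q ^ m - 1‖ = 2 * |Real.sin (π * (d:ℝ)^2 / n)| := by
    rw [hqm, abs_exp_mul_I_sub_one]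
    congr 2
    ring
  have habsq : ‖q - 1‖ = 2 * Real.sin (π * (d:ℝ) / n) := by
    rw [hq, hw, abs_exp_mul_I_sub_one]
    have : -(2*π*(d:ℝ)/n) / 2 = -(π * (d:ℝ)/n) := by ring
    rw [this, Real.sin_neg, abs_neg, _root_.abs_of_nonneg]
    apply Real.sin_nonneg_of_nonneg_of_le_pi
    · positivity
    · rw [div_le_iff₀ (by positivity)]
      nlinarith [Real.pi_pos, (by exact_mod_cast hd2 : (d:ℝ) ≤ (n:ℝ) - 1)]
  rw [step3, norm_mul, norm_div, hc, Complex.norm_exp_ofReal_mul_I, one_mul, habsqm, habsq]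
  rw [mul_div_mul_left _ _ (by norm_num : (2:ℝ) ≠ 0)]

lemma sq_div_le {s₁ s₂ X Y : ℝ} (hX : 0 ≤ X) (hY : 0 < Y) (h1 : |s₁| ≤ X) (h2 : Y ≤ s₂) :
    (|s₁| / s₂)^2 ≤ X^2 / Y^2 := by
  have hs2 : 0 < s₂ := lt_of_lt_of_le hY h2
  rw [div_pow]
  apply div_le_div₀ (by positivity) (by nlinarith [abs_nonneg s₁]) (by positivity)
  nlinarith

lemma sin_bound_lower (n : ℕ) (hn : 1 ≤ n) (d : ℤ) (hd1 : 1 ≤ d) (hd2 : d ≤ (n:ℤ)-1) :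
    2 * ((min d ((n:ℤ)-d) : ℤ):ℝ) / n ≤ Real.sin (π * (d:ℝ) / n) := by
  have hn0 : (0:ℝ) < n := by exact_mod_cast hn
  have hpi := Real.pi_pos
  set e : ℤ := min d ((n:ℤ)-d) with he
  have he1 : 1 ≤ e := by omega
  have he2 : 2*e ≤ (n:ℤ) := by omega
  have he1R : (1:ℝ) ≤ (e:ℝ) := by exact_mod_cast he1
  have he2R : 2*(e:ℝ) ≤ (n:ℝ) := by exact_mod_cast he2
  have key : Real.sin (π * (d:ℝ) / n) = Real.sin (π * (e:ℝ) / n) := by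
    rcases min_choice d ((n:ℤ)-d) with h | h
    · rw [← he] at h; rw [h]
    · rw [← he] at h
      have hdr : (d:ℝ) = (n:ℝ) - (e:ℝ) := by
        have h2 : (e:ℤ) = (n:ℤ) - d := h
        have h3 : ((e:ℤ):ℝ) = ((n:ℤ):ℝ) - (d:ℝ) := by exact_mod_cast h2
        push_cast at h3 ⊢
        linarith
      rw [hdr]
      have : π * ((n:ℝ) - e) / n = π - π * (e:ℝ)/n := by field_simp
      rw [this, Real.sin_pi_sub]
  rw [key]
  have harg1 : 0 ≤ π * (e:ℝ) / n := by positivity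
  have harg2 : π * (e:ℝ) / n ≤ π / 2 := by
    rw [div_le_div_iff₀ hn0 (by norm_num : (0:ℝ) < 2)]
    nlinarith
  have := Real.mul_le_sin harg1 harg2
  calc 2 * (e:ℝ) / n = 2/π * (π * (e:ℝ)/n) := by field_simp
    _ ≤ Real.sin (π * (e:ℝ)/n) := this

lemma sin_bound_upper (n : ℕ) (hn : 1 ≤ n) (d : ℤ) (hd1 : 1 ≤ d) (hd2 : d ≤ (n:ℤ)-1) :
    |Real.sin (π * (d:ℝ)^2 / n)| ≤ π * ((min d ((n:ℤ)-d) : ℤ):ℝ)^2 / n := by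
  have hn0 : (0:ℝ) < n := by exact_mod_cast hn
  have hpi := Real.pi_pos
  set e : ℤ := min d ((n:ℤ)-d) with he
  have key : |Real.sin (π * (d:ℝ)^2 / n)| = |Real.sin (π * (e:ℝ)^2 / n)| := by
    rcases min_choice d ((n:ℤ)-d) with h | h
    · rw [← he] at h; rw [h]
    · rw [← he] at h
      have hh : (e:ℝ) = (n:ℝ) - (d:ℝ) := by exact_mod_cast h
      have harg : π * (d:ℝ)^2 / n = π * (e:ℝ)^2/n + ((2*d - n : ℤ):ℝ) * π := by
        push_cast [hh]
        field_simp
        ring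
      rw [harg, Real.sin_add_int_mul_pi, abs_mul]
      have hone : |((-1:ℝ)) ^ (2*d - (n:ℤ))| = 1 := by
        rcases Int.even_or_odd (2*d - (n:ℤ)) with hpar | hpar
        · rw [hpar.neg_one_zpow, abs_one]
        · rw [hpar.neg_one_zpow, abs_neg, abs_one]
      rw [hone, one_mul]
  rw [key]
  calc |Real.sin (π * (e:ℝ)^2 / n)| ≤ |π * (e:ℝ)^2 / n| := Real.abs_sin_le_abs
    _ = π * (e:ℝ)^2 / n := by
        rw [_root_.abs_of_nonneg (by positivity)]

lemma step_ineq (x : ℝ) (hx : 1 ≤ x) : 1/(x+1)^2 ≤ 1/x - 1/(x+1) := by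
  rw [div_sub_div _ _ (by linarith) (by linarith), div_le_div_iff₀ (by positivity) (by positivity)]
  ring_nf
  nlinarith

lemma sum_inv_sq_aux (s : ℕ) (hs : 1 ≤ s) (t : ℕ) :
    ∑ d ∈ Finset.Icc (s+1) (s+t), (1:ℝ)/(d:ℝ)^2 ≤ 1/s - 1/((s:ℝ)+t) := by
  induction t with
  | zero => simp
  | succ t ih =>
    rw [show s + (t+1) = (s+t) + 1 by omega, Finset.sum_Icc_succ_top (by omega)]
    have hx : (1:ℝ) ≤ ((s:ℝ)+t) := by
      have : (1:ℝ) ≤ (s:ℝ) := by exact_mod_cast hs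
      have ht : (0:ℝ) ≤ (t:ℝ) := by positivity
      linarith
    have := step_ineq ((s:ℝ)+t) hx
    have hcast : (((s+t+1 : ℕ)):ℝ) = (s:ℝ) + t + 1 := by push_cast; ring
    rw [hcast]
    push_cast
    rw [show (s:ℝ) + ((t:ℝ)+1) = (s:ℝ)+(t:ℝ)+1 by ring]
    linarith [ih]

lemma sum_inv_sq_tail (s : ℕ) (hs : 1 ≤ s) (m : ℕ) :
    ∑ d ∈ Finset.Icc (s+1) m, (1:ℝ)/(d:ℝ)^2 ≤ 1/s := by
  rcases le_or_gt m s with h | h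
  · rw [Finset.Icc_eq_empty (by omega)]
    simp
  · have hm : m = s + (m - s) := by omega
    rw [hm]
    have := sum_inv_sq_aux s hs (m - s)
    have h2 : 0 ≤ 1/((s:ℝ) + (m-s:ℕ)) := by positivity
    linarith

lemma sum_H_bound (n : ℕ) (hn : 1 ≤ n) (H : ℕ → ℝ)
    (hH1 : ∀ d, 1 ≤ d → H d ≤ Real.pi^2*(d:ℝ)^2/4)
    (hH2 : ∀ d, 1 ≤ d → H d ≤ (n:ℝ)^2/(4*(d:ℝ)^2)) :
    ∑ d ∈ Finset.Icc 1 (n-1), H d ≤ 5 * n * Real.sqrt n := by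
  have hnR : (1:ℝ) ≤ (n:ℝ) := by exact_mod_cast hn
  have hsqrt_pos : 0 < Real.sqrt n := Real.sqrt_pos.mpr (by linarith)
  rcases eq_or_lt_of_le hn with h1 | h1
  · rw [← h1]
    norm_num
  have hn2 : 2 ≤ n := h1
  set s := Nat.sqrt n with hsdef
  have hs1 : 1 ≤ s := by
    have := Nat.sqrt_pos.mpr (by omega : 0 < n)
    omega
  have hslt : s < n := Nat.sqrt_lt_self (by omega)
  have hs2 : s ≤ n - 1 := by omega
  have hsq_le : (s:ℝ)^2 ≤ (n:ℝ) := by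
    have h := Nat.sqrt_le' n
    have h2 : ((s^2:ℕ):ℝ) ≤ (n:ℝ) := by exact_mod_cast h
    push_cast at h2
    linarith
  have hs_le_sqrt : (s:ℝ) ≤ Real.sqrt n := by
    rw [Real.le_sqrt (by positivity) (by positivity)]
    exact hsq_le
  have hsqrt_lt : Real.sqrt n < (s:ℝ) + 1 := by
    rw [Real.sqrt_lt' (by positivity)]
    have h := Nat.lt_succ_sqrt' n
    have h2 : (n:ℝ) < (((s+1)^2 : ℕ):ℝ) := by exact_mod_cast h
    push_cast at h2
    nlinarith [h2]
  have hsplit : Finset.Icc 1 (n-1) = Finset.Icc 1 s ∪ Finset.Icc (s+1) (n-1) := by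
    ext x
    simp only [Finset.mem_Icc, Finset.mem_union]
    omega
  have hdisj : Disjoint (Finset.Icc 1 s) (Finset.Icc (s+1) (n-1)) := by
    rw [Finset.disjoint_left]
    intro x hx hx'
    simp only [Finset.mem_Icc] at hx hx'
    omega
  rw [hsplit, Finset.sum_union hdisj]
  have hpi4 : Real.pi ≤ 4 := Real.pi_le_four
  have part1 : ∑ d ∈ Finset.Icc 1 s, H d ≤ 4 * n * Real.sqrt n := by
    have hterm : ∀ d ∈ Finset.Icc 1 s, H d ≤ 4 * (n:ℝ) := by
      intro d hd
      simp only [Finset.mem_Icc] at hd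
      have hd1 := hH1 d hd.1
      have hdR : (d:ℝ) ≤ (s:ℝ) := by exact_mod_cast hd.2
      have hd0 : (0:ℝ) ≤ (d:ℝ) := by positivity
      have hpi0 := Real.pi_pos
      have hpi2 : Real.pi^2 ≤ 16 := by nlinarith [hpi4, hpi0]
      have hdn : (d:ℝ)^2 ≤ (n:ℝ) := by nlinarith [hsq_le, hdR, hd0]
      have key : Real.pi^2 * (d:ℝ)^2 ≤ 16 * (n:ℝ) := by
        nlinarith [hpi2, hdn, sq_nonneg (d:ℝ), hpi0, sq_nonneg Real.pi]
      linarith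
    calc ∑ d ∈ Finset.Icc 1 s, H d ≤ ∑ _d ∈ Finset.Icc 1 s, 4*(n:ℝ) := Finset.sum_le_sum hterm
      _ = (s:ℝ) * (4*(n:ℝ)) := by
          rw [Finset.sum_const, Nat.card_Icc]
          simp [nsmul_eq_mul]
      _ ≤ Real.sqrt n * (4*(n:ℝ)) := by
          apply mul_le_mul_of_nonneg_right hs_le_sqrt (by positivity)
      _ = 4 * n * Real.sqrt n := by ring
  have part2 : ∑ d ∈ Finset.Icc (s+1) (n-1), H d ≤ (n:ℝ) * Real.sqrt n := by
    have hterm : ∀ d ∈ Finset.Icc (s+1) (n-1), H d ≤ (n:ℝ)^2/4 * (1/(d:ℝ)^2) := by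
      intro d hd
      simp only [Finset.mem_Icc] at hd
      have := hH2 d (by omega)
      have hd0 : (0:ℝ) < (d:ℝ) := by
        have h1d : (1:ℕ) ≤ d := by omega
        have : (1:ℝ) ≤ (d:ℝ) := by exact_mod_cast h1d
        linarith
      calc H d ≤ (n:ℝ)^2/(4*(d:ℝ)^2) := this
        _ = (n:ℝ)^2/4 * (1/(d:ℝ)^2) := by field_simp
    calc ∑ d ∈ Finset.Icc (s+1) (n-1), H d
        ≤ ∑ d ∈ Finset.Icc (s+1) (n-1), (n:ℝ)^2/4 * (1/(d:ℝ)^2) := Finset.sum_le_sum hterm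
      _ = (n:ℝ)^2/4 * ∑ d ∈ Finset.Icc (s+1) (n-1), (1:ℝ)/(d:ℝ)^2 := by
          rw [Finset.mul_sum]
      _ ≤ (n:ℝ)^2/4 * (1/(s:ℝ)) := by
          apply mul_le_mul_of_nonneg_left (sum_inv_sq_tail s hs1 (n-1)) (by positivity)
      _ ≤ (n:ℝ) * Real.sqrt n := by
          have hsq : Real.sqrt n * Real.sqrt n = (n:ℝ) := Real.mul_self_sqrt (by positivity)
          have hs0 : (0:ℝ) < (s:ℝ) := by exact_mod_cast hs1
          have h2s : Real.sqrt n ≤ 2*(s:ℝ) := by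
            have : (1:ℝ) ≤ (s:ℝ) := by exact_mod_cast hs1
            linarith [hsqrt_lt]
          rw [mul_one_div, div_le_iff₀ (by positivity : (0:ℝ) < (s:ℝ))]
          have hkey := mul_le_mul_of_nonneg_left h2s (le_of_lt hsqrt_pos)
          rw [hsq] at hkey
          nlinarith [hkey, hs0, hsqrt_pos, hnR]
  linarith [part1, part2]

lemma sum_Icc1_int_eq_nat (m : ℕ) (f : ℤ → ℝ) :
    ∑ d ∈ Finset.Icc (1:ℤ) (m:ℤ), f d = ∑ d ∈ Finset.Icc 1 m, f (d:ℤ) := by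
  refine Finset.sum_nbij' (fun j => j.toNat) (fun i => (i:ℤ)) ?_ ?_ ?_ ?_ ?_
  · intro j hj; simp only [Finset.mem_Icc] at hj ⊢; omega
  · intro i hi; simp only [Finset.mem_Icc] at hi ⊢; omega
  · intro j hj; simp only [Finset.mem_Icc] at hj; omega
  · intro i hi; simp only [Finset.mem_Icc] at hi; omega
  · intro j hj; simp only [Finset.mem_Icc] at hj; congr 1; omega

/-- Main estimate: the sum of squared autocorrelation magnitudes over positive shifts. -/
lemma sum_corr_sq (n : ℕ) (hn : 1 ≤ n) :
    ∑ d ∈ Finset.Icc (1:ℤ) ((n:ℤ)-1), (‖corr n (chu n 1) (chu n 1) d‖)^2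
      ≤ 10 * n * Real.sqrt n := by
  have hnR : (1:ℝ) ≤ (n:ℝ) := by exact_mod_cast hn
  set H : ℕ → ℝ := fun e => min ((n:ℝ)^2/(4*(e:ℝ)^2)) (Real.pi^2*(e:ℝ)^2/4) with hH
  have hH0 : ∀ e : ℕ, 0 ≤ H e := by
    intro e
    apply le_min
    · positivity
    · positivity
  have key : ∀ d : ℕ, 1 ≤ d → d ≤ n-1 →
      (‖corr n (chu n 1) (chu n 1) (d:ℤ)‖)^2 ≤ H d + H (n-d) := by
    intro d hd1 hd2
    have hd1' : 1 ≤ (d:ℤ) := by exact_mod_cast hd1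
    have hd2' : (d:ℤ) ≤ (n:ℤ)-1 := by omega
    set e : ℕ := min d (n-d) with hedef
    have heZ : ((e:ℕ):ℤ) = min ((d:ℕ):ℤ) ((n:ℤ) - ((d:ℕ):ℤ)) := by omega
    have he1 : 1 ≤ e := by omega
    have he1R : (1:ℝ) ≤ (e:ℝ) := by exact_mod_cast he1
    have hn0 : (0:ℝ) < (n:ℝ) := by linarith
    have he0 : (0:ℝ) < (e:ℝ) := by linarith
    have habs := abs_corr_chu n (d:ℤ) hd1' hd2'
    have hlow := sin_bound_lower n hn (d:ℤ) hd1' hd2'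
    have hupp := sin_bound_upper n hn (d:ℤ) hd1' hd2'
    rw [← heZ] at hlow hupp
    push_cast at hlow hupp
    have hb1 : (‖corr n (chu n 1) (chu n 1) (d:ℤ)‖)^2
        ≤ (1:ℝ)^2 / (2*(e:ℝ)/n)^2 := by
      rw [habs]
      exact sq_div_le (by norm_num) (by positivity) (Real.abs_sin_le_one _) hlow
    have hb2 : (‖corr n (chu n 1) (chu n 1) (d:ℤ)‖)^2
        ≤ (π*(e:ℝ)^2/n)^2 / (2*(e:ℝ)/n)^2 := by
      rw [habs]
      exact sq_div_le (by positivity) (by positivity) hupp hlow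
    have hsimp1 : (1:ℝ)^2 / (2*(e:ℝ)/n)^2 = (n:ℝ)^2/(4*(e:ℝ)^2) := by
      field_simp
      ring
    have hsimp2 : (π*(e:ℝ)^2/n)^2 / (2*(e:ℝ)/n)^2 = Real.pi^2*(e:ℝ)^2/4 := by
      field_simp
      ring
    rw [hsimp1] at hb1
    rw [hsimp2] at hb2
    have hmin : (‖corr n (chu n 1) (chu n 1) (d:ℤ)‖)^2 ≤ H e := le_min hb1 hb2
    rcases min_choice d (n-d) with h | h
    · rw [← hedef] at h
      rw [h] at hmin
      linarith [hH0 (n-d)]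
    · rw [← hedef] at h
      rw [h] at hmin
      linarith [hH0 d]
  have hcast : ((n-1:ℕ):ℤ) = (n:ℤ)-1 := by omega
  rw [← hcast, sum_Icc1_int_eq_nat]
  have hrefl : ∑ d ∈ Finset.Icc 1 (n-1), H (n-d) = ∑ d ∈ Finset.Icc 1 (n-1), H d := by
    refine Finset.sum_nbij' (fun d => n-d) (fun d => n-d) ?_ ?_ ?_ ?_ ?_
    · intro d hd; simp only [Finset.mem_Icc] at hd ⊢; omega
    · intro d hd; simp only [Finset.mem_Icc] at hd ⊢; omega
    · intro d hd; simp only [Finset.mem_Icc] at hd; omega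
    · intro d hd; simp only [Finset.mem_Icc] at hd; omega
    · intro d hd; rfl
  have hsum : ∑ d ∈ Finset.Icc 1 (n-1), (‖corr n (chu n 1) (chu n 1) ((d:ℕ):ℤ)‖)^2
      ≤ ∑ d ∈ Finset.Icc 1 (n-1), (H d + H (n-d)) := by
    apply Finset.sum_le_sum
    intro d hd
    simp only [Finset.mem_Icc] at hd
    exact key d hd.1 hd.2
  rw [Finset.sum_add_distrib, hrefl] at hsum
  have hHb := sum_H_bound n hn H
    (fun d _ => min_le_right _ _)
    (fun d _ => min_le_left _ _)
  calc ∑ d ∈ Finset.Icc 1 (n-1), (‖corr n (chu n 1) (chu n 1) ((d:ℕ):ℤ)‖)^2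
      ≤ ∑ d ∈ Finset.Icc 1 (n-1), H d + ∑ d ∈ Finset.Icc 1 (n-1), H d := hsum
    _ ≤ 5 * n * Real.sqrt n + 5 * n * Real.sqrt n := by linarith [hHb]
    _ = 10 * n * Real.sqrt n := by ring

/-! ### Main result -/

lemma cdf_sub_one_bound (n : ℕ) (hn : 1 ≤ n) :
    |cdf n (chu n 1) (chu n (-1)) - 1| ≤ 20 / Real.sqrt n := by
  classical
  have hnR : (1:ℝ) ≤ (n:ℝ) := by exact_mod_cast hn
  have hn0 : (0:ℝ) < (n:ℝ) := by linarith
  have hsqrt_pos : 0 < Real.sqrt n := Real.sqrt_pos.mpr hn0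
  set X := chu n 1 with hX
  set Y := chu n (-1) with hY
  set U := Finset.Icc (-(n:ℤ)+1) ((n:ℤ)-1) with hU
  have h0U : (0:ℤ) ∈ U := by rw [hU]; simp only [Finset.mem_Icc]; omega
  have habsX : ‖corr n X X 0‖ = (n:ℝ) := by
    rw [hX, corr_chu_self_zero n 1]; simp
  have habsY : ‖corr n Y Y 0‖ = (n:ℝ) := by
    rw [hY, corr_chu_self_zero n (-1)]; simp
  have hnum : ∑ u ∈ U, ‖corr n X Y u‖ ^ 2
      = (∑ d ∈ U, corr n X X d * (starRingEnd ℂ) (corr n Y Y d)).re := by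
    rw [← corr_fubini, Complex.re_sum]
    refine Finset.sum_congr rfl fun u _ => ?_
    rw [Complex.mul_conj, Complex.ofReal_re]
    exact Complex.sq_norm _
  set R : ℂ := ∑ d ∈ U.erase 0, corr n X X d * (starRingEnd ℂ) (corr n Y Y d) with hRdef
  have hsplit : ∑ d ∈ U, corr n X X d * (starRingEnd ℂ) (corr n Y Y d)
      = (n:ℂ) * (n:ℂ) + R := by
    rw [hRdef, ← Finset.add_sum_erase U _ h0U]
    congr 1
    rw [hX, hY, corr_chu_self_zero n 1, corr_chu_self_zero n (-1), Complex.conj_natCast]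
  have hre : (∑ d ∈ U, corr n X X d * (starRingEnd ℂ) (corr n Y Y d)).re
      = (n:ℝ)*(n:ℝ) + R.re := by
    rw [hsplit, Complex.add_re]
    congr 1
    simp [Complex.mul_re]
  have hcdf : cdf n X Y - 1 = R.re / ((n:ℝ)*(n:ℝ)) := by
    unfold cdf
    rw [← hU, habsX, habsY, hnum, hre]
    field_simp
    ring
  -- bound |R.re|
  have hRbound : |R.re| ≤ 20 * (n:ℝ) * Real.sqrt n := by
    have h1 : |R.re| ≤ ‖R‖ := Complex.abs_re_le_norm R
    have h2 : ‖R‖ ≤ ∑ d ∈ U.erase 0,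
        ‖corr n X X d * (starRingEnd ℂ) (corr n Y Y d)‖ := by
      rw [hRdef]; exact norm_sum_le _ _
    have h3 : ∀ d : ℤ, ‖corr n X X d * (starRingEnd ℂ) (corr n Y Y d)‖
        = (‖corr n X X d‖)^2 := by
      intro d
      rw [norm_mul, Complex.norm_conj, hY, corr_chu_neg n d, Complex.norm_conj, ← hX, sq]
    have h4 : ∑ d ∈ U.erase 0, ‖corr n X X d * (starRingEnd ℂ) (corr n Y Y d)‖
        = ∑ d ∈ U.erase 0, (‖corr n X X d‖)^2 := by
      exact Finset.sum_congr rfl fun d _ => h3 d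
    -- split erase into negative and positive parts
    have hsetsplit : U.erase 0 = Finset.Icc (-(n:ℤ)+1) (-1) ∪ Finset.Icc 1 ((n:ℤ)-1) := by
      ext x
      simp only [Finset.mem_erase, Finset.mem_union, Finset.mem_Icc, hU]
      omega
    have hdisj : Disjoint (Finset.Icc (-(n:ℤ)+1) (-1)) (Finset.Icc (1:ℤ) ((n:ℤ)-1)) := by
      rw [Finset.disjoint_left]
      intro x hx hx'
      simp only [Finset.mem_Icc] at hx hx'
      omega
    have hnegsum : ∑ d ∈ Finset.Icc (-(n:ℤ)+1) (-1), (‖corr n X X d‖)^2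
        = ∑ d ∈ Finset.Icc (1:ℤ) ((n:ℤ)-1), (‖corr n X X d‖)^2 := by
      refine Finset.sum_nbij' (fun d => -d) (fun d => -d) ?_ ?_ ?_ ?_ ?_
      · intro d hd; simp only [Finset.mem_Icc] at hd ⊢; omega
      · intro d hd; simp only [Finset.mem_Icc] at hd ⊢; omega
      · intro d _; omega
      · intro d _; omega
      · intro d hd
        have h := corr_neg n (chu n 1) (-d)
        rw [neg_neg] at h
        rw [hX, h, Complex.norm_conj]
    have hposs := sum_corr_sq n hn
    have h5 : ∑ d ∈ U.erase 0, (‖corr n X X d‖)^2 ≤ 20 * n * Real.sqrt n := by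
      rw [hsetsplit, Finset.sum_union hdisj, hnegsum]
      rw [hX]
      linarith [hposs]
    linarith [h1, h2.trans (le_of_eq h4) |>.trans h5]
  rw [hcdf, abs_div, _root_.abs_of_nonneg (by positivity : (0:ℝ) ≤ (n:ℝ)*(n:ℝ))]
  rw [div_le_div_iff₀ (by positivity) hsqrt_pos]
  have hsq : Real.sqrt n * Real.sqrt n = (n:ℝ) := Real.mul_self_sqrt (by positivity)
  calc |R.re| * Real.sqrt n ≤ (20 * (n:ℝ) * Real.sqrt n) * Real.sqrt n := by
        apply mul_le_mul_of_nonneg_right hRbound (le_of_lt hsqrt_pos)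
    _ = 20 * ((n:ℝ)*(n:ℝ)) := by rw [mul_assoc, hsq]; ring
    _ = 20 * ((n:ℝ)*(n:ℝ)) * 1 := by ring
    _ ≤ 20 * ((n:ℝ)*(n:ℝ)) := by linarith

/-- there is an absolute constant c > 0 with
|CDF(Z_n^(1), Z_n^(-1)) - 1| <= c * n^(-1/6) for all n >= 1; in particular the CDF tends to 1. -/
theorem cdf_chu_one_neg_one :
    (∃ c : ℝ, 0 < c ∧ ∀ n : ℕ, 1 ≤ n →
      |cdf n (chu n 1) (chu n (-1)) - 1| ≤ c * (n : ℝ) ^ (-(1 / 6 : ℝ))) ∧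
    Tendsto (fun n : ℕ => cdf n (chu n 1) (chu n (-1))) atTop (𝓝 1) := by
  have hbound : ∀ n : ℕ, 1 ≤ n →
      |cdf n (chu n 1) (chu n (-1)) - 1| ≤ 20 * (n : ℝ) ^ (-(1 / 6 : ℝ)) := by
    intro n hn
    have hnR : (1:ℝ) ≤ (n:ℝ) := by exact_mod_cast hn
    have hn0 : (0:ℝ) < (n:ℝ) := by linarith
    have h1 := cdf_sub_one_bound n hn
    have h12 : (n:ℝ) ^ (-(1/2 : ℝ)) = 1 / Real.sqrt n := by
      rw [Real.rpow_neg (le_of_lt hn0), Real.sqrt_eq_rpow]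
      exact (one_div _).symm
    have h2 : 20 / Real.sqrt n = 20 * (n:ℝ) ^ (-(1/2 : ℝ)) := by
      rw [h12]; ring
    have h3 : (n:ℝ) ^ (-(1/2 : ℝ)) ≤ (n:ℝ) ^ (-(1/6 : ℝ)) :=
      Real.rpow_le_rpow_of_exponent_le hnR (by norm_num)
    calc |cdf n (chu n 1) (chu n (-1)) - 1| ≤ 20 / Real.sqrt n := h1
      _ = 20 * (n:ℝ) ^ (-(1/2 : ℝ)) := h2
      _ ≤ 20 * (n:ℝ) ^ (-(1/6 : ℝ)) := by linarith [h3]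
  constructor
  · exact ⟨20, by norm_num, hbound⟩
  · have hz : Tendsto (fun n : ℕ => cdf n (chu n 1) (chu n (-1)) - 1) atTop (𝓝 0) := by
      apply squeeze_zero_norm' (a := fun n : ℕ => 20 * (n : ℝ) ^ (-(1 / 6 : ℝ)))
      · filter_upwards [eventually_ge_atTop 1] with n hn
        exact hbound n hn
      · have h0 : Tendsto (fun x : ℝ => x ^ (-(1/6 : ℝ))) atTop (𝓝 0) :=
          tendsto_rpow_neg_atTop (by norm_num)
        have h1 : Tendsto (fun n : ℕ => (n:ℝ) ^ (-(1/6 : ℝ))) atTop (𝓝 0) :=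
          h0.comp tendsto_natCast_atTop_atTop
        have := h1.const_mul (20:ℝ)
        simpa using this
    have := hz.add_const 1
    simpa using this
end
end

section
/- The limit as n tends to infinity of n^{-3/2} · Σ_{1 ≤ u ≤ n/2} (sin(π u²/n) / (π u/n))² equals 1/(2π), where the sum runs over integers u with 1 ≤ u ≤ n/2. -/
open Complex Real Filter Topology

noncomputable section

open MeasureTheory Set

namespace ChuAux

/-- The function whose limit/integral is `1/(2π)`. -/
def gg (t : ℝ) : ℝ := (Real.sin (Real.pi * t ^ 2) / (Real.pi * t)) ^ 2

def kk (t ε : ℝ) : ℝ := Real.sin (Real.pi * t ^ 2) ^ 2 * Real.exp (-(ε * t ^ 2)) / Real.pi ^ 2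

def Gfun (ε : ℝ) : ℝ := ∫ t in Ioi (0 : ℝ), kk t ε

def Hfun (ε : ℝ) : ℝ :=
  Real.sqrt Real.pi / (2 * Real.pi ^ 2) *
    (Real.sqrt ε - (((ε : ℂ) - 2 * Real.pi * Complex.I) ^ (1 / 2 : ℂ)).re)

lemma bb_im (ε : ℝ) : ((ε : ℂ) - 2 * Real.pi * Complex.I).im = -(2 * Real.pi) := by
  simp

lemma bb_ne (ε : ℝ) : ((ε : ℂ) - 2 * Real.pi * Complex.I) ≠ 0 := by
  intro h
  have := congrArg Complex.im h
  rw [bb_im] at this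
  simp at this

lemma bb_slit (ε : ℝ) : ((ε : ℂ) - 2 * Real.pi * Complex.I) ∈ Complex.slitPlane := by
  rw [Complex.mem_slitPlane_iff]
  right
  rw [bb_im]
  exact neg_ne_zero.mpr (by positivity)

lemma bb_arg_ne (ε : ℝ) : ((ε : ℂ) - 2 * Real.pi * Complex.I).arg ≠ Real.pi := by
  intro h
  rw [Complex.arg_eq_pi_iff] at h
  have := h.2
  rw [bb_im] at this
  simp at this

/-- splitting the square root: `(π/b)^(1/2) = √π * b^(-1/2)` off the negative real axis. -/
lemma sqrt_pi_div {b : ℂ} (hb : b ≠ 0) (harg : b.arg ≠ Real.pi) :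
    ((Real.pi : ℂ) / b) ^ (1 / 2 : ℂ) =
      (Real.sqrt Real.pi : ℂ) * b ^ (-(1 / 2) : ℂ) := by
  have hπb : (Real.pi : ℂ) / b ≠ 0 := by
    apply div_ne_zero _ hb
    exact_mod_cast Complex.ofReal_ne_zero.mpr Real.pi_ne_zero
  rw [Complex.cpow_def_of_ne_zero hπb, Complex.cpow_def_of_ne_zero hb]
  have hlog : Complex.log ((Real.pi : ℂ) / b) = (Real.log Real.pi : ℂ) - Complex.log b := by
    rw [div_eq_mul_inv, Complex.log_ofReal_mul Real.pi_pos (inv_ne_zero hb),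
      Complex.log_inv b harg, sub_eq_add_neg]
  rw [hlog]
  have h1 : ((Real.log Real.pi : ℂ) - Complex.log b) * (1 / 2)
      = (Real.log Real.pi / 2 : ℝ) + Complex.log b * (-(1 / 2)) := by
    push_cast; ring
  rw [h1, Complex.exp_add]
  congr 1
  rw [← Complex.ofReal_exp]
  norm_cast
  rw [← Real.log_sqrt Real.pi_pos.le, Real.exp_log (Real.sqrt_pos.mpr Real.pi_pos)]

end ChuAux

namespace ChuAux

lemma Gfun_eq {ε : ℝ} (hε : 0 < ε) :
    Gfun ε = Real.sqrt Real.pi / (4 * Real.pi ^ 2) *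
      (1 / Real.sqrt ε - (((ε : ℂ) - 2 * Real.pi * Complex.I) ^ (-(1 / 2) : ℂ)).re) := by
  set b : ℂ := (ε : ℂ) - 2 * Real.pi * Complex.I with hb_def
  have hbre : 0 < b.re := by simp [hb_def, hε]
  have I1 : IntegrableOn (fun t : ℝ => Real.exp (-(ε * t ^ 2))) (Ioi 0) := by
    simpa [neg_mul] using (integrable_exp_neg_mul_sq hε).integrableOn
  have I2 : IntegrableOn
      (fun t : ℝ => Real.cos (2 * (Real.pi * t ^ 2)) * Real.exp (-(ε * t ^ 2))) (Ioi 0) := by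
    apply Integrable.mono' I1
    · apply (Continuous.mul (by continuity) (by continuity)).aestronglyMeasurable
    · filter_upwards with t
      rw [norm_mul, Real.norm_eq_abs, Real.norm_eq_abs, Real.abs_exp]
      calc |Real.cos (2 * (Real.pi * t ^ 2))| * Real.exp (-(ε * t ^ 2))
          ≤ 1 * Real.exp (-(ε * t ^ 2)) := by
            gcongr; exact Real.abs_cos_le_one _
        _ = _ := one_mul _
  have key : (fun t : ℝ => Real.sin (Real.pi * t ^ 2) ^ 2 * Real.exp (-(ε * t ^ 2))) =
      fun t : ℝ => (1 / 2) * Real.exp (-(ε * t ^ 2)) -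
        (1 / 2) * (Real.cos (2 * (Real.pi * t ^ 2)) * Real.exp (-(ε * t ^ 2))) := by
    funext t
    rw [Real.sin_sq_eq_half_sub]
    ring
  have hgauss : ∫ t in Ioi (0 : ℝ), Real.exp (-(ε * t ^ 2)) = Real.sqrt (Real.pi / ε) / 2 := by
    simpa [neg_mul] using integral_gaussian_Ioi ε
  have hcos : ∫ t in Ioi (0 : ℝ), Real.cos (2 * (Real.pi * t ^ 2)) * Real.exp (-(ε * t ^ 2))
      = (((Real.pi : ℂ) / b) ^ (1 / 2 : ℂ) / 2).re := by
    have hre : ∀ t : ℝ, Real.cos (2 * (Real.pi * t ^ 2)) * Real.exp (-(ε * t ^ 2))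
        = (Complex.exp (-b * (t : ℂ) ^ 2)).re := by
      intro t
      rw [Complex.exp_re]
      have h1 : (-b * (t : ℂ) ^ 2).re = -(ε * t ^ 2) := by
        simp [hb_def, ← Complex.ofReal_pow]; try ring
      have h2 : (-b * (t : ℂ) ^ 2).im = 2 * (Real.pi * t ^ 2) := by
        simp [hb_def, ← Complex.ofReal_pow]; try ring
      rw [h1, h2]; ring
    rw [← integral_gaussian_complex_Ioi hbre]
    simp_rw [hre]
    have := integral_re (μ := volume.restrict (Ioi (0:ℝ)))
      (f := fun t : ℝ => Complex.exp (-b * (t : ℂ) ^ 2))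
      ((integrable_cexp_neg_mul_sq hbre).integrableOn)
    simpa using this
  have split : ∫ t in Ioi (0:ℝ), Real.sin (Real.pi * t ^ 2) ^ 2 * Real.exp (-(ε * t ^ 2))
      = (1/2) * (Real.sqrt (Real.pi / ε) / 2)
        - (1/2) * (((Real.pi : ℂ) / b) ^ (1 / 2 : ℂ) / 2).re := by
    rw [← hgauss, ← hcos]
    rw [show (fun t : ℝ => Real.sin (Real.pi * t ^ 2) ^ 2 * Real.exp (-(ε * t ^ 2))) = _ from key]
    rw [integral_sub (I1.const_mul _) (I2.const_mul _), integral_const_mul, integral_const_mul]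
  have : Gfun ε = (∫ t in Ioi (0:ℝ),
      Real.sin (Real.pi * t ^ 2) ^ 2 * Real.exp (-(ε * t ^ 2))) / Real.pi ^ 2 := by
    rw [Gfun]
    simp_rw [kk]
    rw [integral_div]
  rw [this, split, sqrt_pi_div (bb_ne ε) (bb_arg_ne ε)]
  rw [Real.sqrt_div Real.pi_pos.le]
  have hre2 : ((Real.sqrt Real.pi : ℂ) * b ^ (-(1 / 2) : ℂ) / 2).re
      = Real.sqrt Real.pi * (b ^ (-(1 / 2) : ℂ)).re / 2 := by
    rw [div_eq_mul_inv, show ((2:ℂ))⁻¹ = ((2⁻¹ : ℝ) : ℂ) by norm_num]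
    rw [mul_assoc]
    rw [show (Real.sqrt Real.pi : ℂ) * (b ^ (-(1 / 2) : ℂ) * ((2⁻¹:ℝ):ℂ))
        = (Real.sqrt Real.pi : ℂ) * (b ^ (-(1 / 2) : ℂ)) * ((2⁻¹:ℝ):ℂ) by ring]
    rw [Complex.mul_re, Complex.ofReal_re, Complex.ofReal_im]
    simp [Complex.mul_re]
    ring
  rw [hre2]
  have hπ : (Real.pi : ℝ) ≠ 0 := Real.pi_ne_zero
  field_simp
  ring

end ChuAux

namespace ChuAux

lemma Hfun_hasDeriv {ε : ℝ} (hε : 0 < ε) : HasDerivAt Hfun (Gfun ε) ε := by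
  have hc : HasDerivAt (fun z : ℂ => (z - 2 * Real.pi * Complex.I) ^ (1 / 2 : ℂ))
      ((1 / 2 : ℂ) * ((ε : ℂ) - 2 * Real.pi * Complex.I) ^ (-(1 / 2) : ℂ)) (ε : ℂ) := by
    have h0 : ((ε : ℂ) - 2 * Real.pi * Complex.I) ∈ Complex.slitPlane := bb_slit ε
    have hd : HasDerivAt (fun z : ℂ => z - 2 * Real.pi * Complex.I) 1 (ε : ℂ) :=
      (hasDerivAt_id _).sub_const _
    have h := hd.cpow_const (c := (1 / 2 : ℂ)) h0
    rw [show (1 / 2 : ℂ) - 1 = -(1 / 2) by norm_num] at h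
    simpa using h
  have hre : HasDerivAt
      (fun x : ℝ => (((x : ℂ) - 2 * Real.pi * Complex.I) ^ (1 / 2 : ℂ)).re)
      (((1 / 2 : ℂ) * ((ε : ℂ) - 2 * Real.pi * Complex.I) ^ (-(1 / 2) : ℂ)).re) ε :=
    HasDerivAt.real_of_complex hc
  have hsqrt : HasDerivAt Real.sqrt (1 / (2 * Real.sqrt ε)) ε :=
    Real.hasDerivAt_sqrt hε.ne'
  have := ((hsqrt.sub hre).const_mul (Real.sqrt Real.pi / (2 * Real.pi ^ 2)))
  convert this using 1
  · rfl
  · rfl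
  · rfl
  rw [Gfun_eq hε]
  have hmre : (((1 / 2 : ℂ) * ((ε : ℂ) - 2 * Real.pi * Complex.I) ^ (-(1 / 2) : ℂ))).re
      = (1 / 2) * (((ε : ℂ) - 2 * Real.pi * Complex.I) ^ (-(1 / 2) : ℂ)).re := by
    rw [Complex.mul_re]
    norm_num
  rw [hmre]
  have h1 : (0:ℝ) < Real.sqrt ε := Real.sqrt_pos.mpr hε
  field_simp
  ring

lemma Hfun_cont : ContinuousWithinAt Hfun (Ici (0:ℝ)) 0 := by
  apply ContinuousAt.continuousWithinAt
  apply ContinuousAt.mul continuousAt_const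
  apply ContinuousAt.sub
  · exact Real.continuous_sqrt.continuousAt
  · apply Complex.continuous_re.continuousAt.comp
    have hin : ContinuousAt (fun x : ℝ => (x : ℂ) - 2 * Real.pi * Complex.I) 0 := by fun_prop
    have hc2 : ContinuousAt (fun z : ℂ => z ^ (1 / 2 : ℂ))
        (((0:ℝ) : ℂ) - 2 * Real.pi * Complex.I) := continuousAt_cpow_const (bb_slit 0)
    exact ContinuousAt.comp (g := fun z : ℂ => z ^ (1 / 2 : ℂ))
      (f := fun x : ℝ => (x : ℂ) - 2 * Real.pi * Complex.I) (x := 0) hc2 hin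

lemma re_half_cpow : ((((0:ℝ) : ℂ) - 2 * Real.pi * Complex.I) ^ (1 / 2 : ℂ)).re
    = Real.sqrt Real.pi := by
  have hrw : (((0:ℝ) : ℂ) - 2 * Real.pi * Complex.I) = ((2 * Real.pi : ℝ) : ℂ) * (-Complex.I) := by
    push_cast; ring
  rw [Complex.cpow_def_of_ne_zero (bb_ne 0), hrw,
    Complex.log_ofReal_mul (by positivity) (by simp), Complex.log_neg_I]
  have : ((Real.log (2 * Real.pi) : ℂ) + -(Real.pi / 2) * Complex.I) * (1 / 2)
      = (Real.log (2 * Real.pi) / 2 : ℝ) + (-(Real.pi / 4) : ℝ) * Complex.I := by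
    push_cast; ring
  rw [this, Complex.exp_add_mul_I, ← Complex.ofReal_exp, ← Complex.ofReal_cos,
    ← Complex.ofReal_sin]
  have hgen : ∀ a c s : ℝ, (((a : ℂ)) * ((c : ℂ) + (s : ℂ) * Complex.I)).re = a * c := by
    intro a c s
    simp [Complex.mul_re, Complex.add_re, Complex.mul_im]
  rw [hgen, Real.cos_neg, Real.cos_pi_div_four]
  rw [← Real.log_sqrt (by positivity), Real.exp_log (by positivity)]
  rw [Real.sqrt_mul (by norm_num : (0:ℝ) ≤ 2)]
  have h2 : Real.sqrt 2 * Real.sqrt 2 = 2 := Real.mul_self_sqrt (by norm_num)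
  rw [show Real.sqrt 2 * Real.sqrt Real.pi * (Real.sqrt 2 / 2)
      = (Real.sqrt 2 * Real.sqrt 2) * Real.sqrt Real.pi / 2 by ring, h2]
  ring

end ChuAux

namespace ChuAux

lemma w_bound {ε : ℝ} (hε : 0 < ε) :
    Real.sqrt ε ≤ ((((ε:ℝ) : ℂ) - 2 * Real.pi * Complex.I) ^ (1 / 2 : ℂ)).re ∧
    ((((ε:ℝ) : ℂ) - 2 * Real.pi * Complex.I) ^ (1 / 2 : ℂ)).re - Real.sqrt ε
      ≤ Real.pi ^ 2 / (ε * Real.sqrt ε) := by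
  set b : ℂ := ((ε:ℝ) : ℂ) - 2 * Real.pi * Complex.I with hb_def
  set w : ℂ := b ^ (1 / 2 : ℂ) with hw_def
  have hbre : 0 < b.re := by simp [hb_def, hε]
  have hw2 : w ^ 2 = b := by
    rw [hw_def, sq, ← Complex.cpow_add _ _ (bb_ne ε)]
    norm_num
    exact hb_def.symm
  have hre2 : w.re ^ 2 - w.im ^ 2 = ε := by
    have := congrArg Complex.re hw2
    rw [sq, Complex.mul_re] at this
    simp [hb_def] at this
    nlinarith [this]
  have him2 : 2 * (w.re * w.im) = -(2 * Real.pi) := by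
    have := congrArg Complex.im hw2
    rw [sq, Complex.mul_im] at this
    simp [hb_def] at this
    nlinarith [this]
  have hrpos : 0 < w.re := by
    have hne : w.re ≠ 0 := by
      intro h
      rw [h] at him2
      simp at him2
    rcases hne.lt_or_gt with hlt | hgt
    · exfalso
      have harg : |Complex.arg b| < Real.pi / 2 :=
        Complex.abs_arg_lt_pi_div_two_iff.mpr (Or.inl hbre)
      have hwe : w = Complex.exp (Complex.log b * (1 / 2 : ℂ)) := by
        rw [hw_def, Complex.cpow_def_of_ne_zero (bb_ne ε)]
      have hrew : w.re = Real.exp ((Complex.log b * (1 / 2 : ℂ)).re) *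
          Real.cos ((Complex.log b * (1 / 2 : ℂ)).im) := by
        rw [hwe, Complex.exp_re]
      have him : (Complex.log b * (1 / 2 : ℂ)).im = Complex.arg b / 2 := by
        rw [Complex.mul_im]
        simp [Complex.log_im]
        ring
      rw [hrew, him] at hlt
      have hcos : 0 < Real.cos (Complex.arg b / 2) := by
        apply Real.cos_pos_of_mem_Ioo
        constructor
        · nlinarith [abs_lt.mp harg, Real.pi_pos]
        · nlinarith [abs_lt.mp harg, Real.pi_pos]
      nlinarith [Real.exp_pos ((Complex.log b * (1 / 2 : ℂ)).re)]
    · exact hgt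
  have hrsq : ε ≤ w.re ^ 2 := by nlinarith [sq_nonneg w.im]
  have hsle : Real.sqrt ε ≤ w.re := by
    calc Real.sqrt ε ≤ Real.sqrt (w.re ^ 2) := Real.sqrt_le_sqrt hrsq
      _ = w.re := Real.sqrt_sq hrpos.le
  refine ⟨hsle, ?_⟩
  have hsε : 0 < Real.sqrt ε := Real.sqrt_pos.mpr hε
  have him2' : w.im ^ 2 ≤ Real.pi ^ 2 / ε := by
    have hmr : w.re * w.im = -Real.pi := by linarith
    have hsq2 : (w.re * w.im) ^ 2 = Real.pi ^ 2 := by rw [hmr]; ring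
    have : w.im ^ 2 * w.re ^ 2 = Real.pi ^ 2 := by nlinarith [hsq2]
    rw [le_div_iff₀ hε]
    nlinarith [hrsq, sq_nonneg w.im]
  have hkey : w.re - Real.sqrt ε = w.im ^ 2 / (w.re + Real.sqrt ε) := by
    rw [eq_div_iff (by positivity)]
    have : Real.sqrt ε ^ 2 = ε := Real.sq_sqrt hε.le
    nlinarith [hre2]
  rw [hkey]
  calc w.im ^ 2 / (w.re + Real.sqrt ε) ≤ (Real.pi ^ 2 / ε) / Real.sqrt ε := by
        apply div_le_div₀ (by positivity) him2' hsε
        linarith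
    _ = Real.pi ^ 2 / (ε * Real.sqrt ε) := by rw [div_div]

lemma Hfun_tendsto : Tendsto Hfun atTop (𝓝 0) := by
  have hB : Tendsto (fun ε : ℝ => Real.sqrt Real.pi / (2 * Real.pi ^ 2) *
      (Real.pi ^ 2 / (ε * Real.sqrt ε))) atTop (𝓝 0) := by
    have hsq : Tendsto Real.sqrt atTop atTop := by
      have h := tendsto_rpow_atTop (y := (1/2 : ℝ)) (by norm_num)
      exact h.congr fun x => (Real.sqrt_eq_rpow x).symm
    have hmul : Tendsto (fun ε : ℝ => ε * Real.sqrt ε) atTop atTop :=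
      tendsto_id.atTop_mul_atTop₀ hsq
    have := (tendsto_const_nhds (x := Real.pi ^ 2) (f := atTop (α := ℝ))).div_atTop hmul
    simpa using this.const_mul (Real.sqrt Real.pi / (2 * Real.pi ^ 2))
  apply squeeze_zero_norm' _ hB
  filter_upwards [eventually_gt_atTop (0:ℝ)] with ε hε
  obtain ⟨h1, h2⟩ := w_bound hε
  rw [Hfun, Real.norm_eq_abs, abs_mul]
  have hc0 : 0 < Real.sqrt Real.pi / (2 * Real.pi ^ 2) := by positivity
  rw [abs_of_pos hc0]
  apply mul_le_mul_of_nonneg_left _ hc0.le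
  rw [abs_sub_comm]
  have h3 : (0:ℝ) ≤ ((((ε : ℝ) : ℂ) - 2 * Real.pi * Complex.I) ^ (1 / 2 : ℂ)).re
      - Real.sqrt ε := by linarith
  rw [_root_.abs_of_nonneg h3]
  exact h2

lemma Hfun_zero : Hfun 0 = -(1 / (2 * Real.pi)) := by
  rw [Hfun, re_half_cpow]
  rw [Real.sqrt_zero]
  have hππ : Real.sqrt Real.pi * Real.sqrt Real.pi = Real.pi :=
    Real.mul_self_sqrt Real.pi_pos.le
  field_simp
  nlinarith [hππ, Real.pi_pos]

lemma Gfun_nonneg : ∀ ε ∈ Ioi (0:ℝ), 0 ≤ Gfun ε := by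
  intro ε _
  apply setIntegral_nonneg measurableSet_Ioi
  intro t _
  simp only [kk]
  positivity

lemma Gfun_integrableOn : IntegrableOn Gfun (Ioi (0:ℝ)) :=
  integrableOn_Ioi_deriv_of_nonneg Hfun_cont (fun x hx => Hfun_hasDeriv hx)
    Gfun_nonneg Hfun_tendsto

lemma Gfun_integral : ∫ ε in Ioi (0:ℝ), Gfun ε = 1 / (2 * Real.pi) := by
  rw [integral_Ioi_of_hasDerivAt_of_nonneg Hfun_cont (fun x hx => Hfun_hasDeriv hx)
    Gfun_nonneg Hfun_tendsto]
  rw [Hfun_zero]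
  ring

end ChuAux

namespace ChuAux

lemma div_le_div_of_nonneg_right' {a b c : ℝ} (h : a ≤ b) (hc : 0 < c) :
    a / c ≤ b / c := by
  gcongr

lemma exp_intOn {c : ℝ} (hc : 0 < c) :
    IntegrableOn (fun ε : ℝ => Real.exp (-(ε * c))) (Ioi (0:ℝ)) := by
  apply (exp_neg_integrableOn_Ioi (0:ℝ) hc).congr_fun _ measurableSet_Ioi
  intro x _
  simp only
  congr 1
  ring

lemma exp_integral {c : ℝ} (hc : 0 < c) :
    ∫ ε in Ioi (0:ℝ), Real.exp (-(ε * c)) = 1 / c := by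
  have hderiv : ∀ x ∈ Ioi (0:ℝ), HasDerivAt (fun ε : ℝ => -(Real.exp (-(ε * c)) / c))
      (Real.exp (-(x * c))) x := by
    intro x _
    have h0 : HasDerivAt (fun ε : ℝ => -(ε * c)) (-c) x := by
      simpa using ((hasDerivAt_id x).mul_const c).fun_neg
    have h1 : HasDerivAt (fun ε : ℝ => Real.exp (-(ε * c))) (Real.exp (-(x * c)) * -c) x :=
      h0.exp
    have := (h1.div_const c).neg
    convert this using 1
    · rfl
    · rfl
    · rfl
    field_simp
  have htend : Tendsto (fun ε : ℝ => -(Real.exp (-(ε * c)) / c)) atTop (𝓝 0) := by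
    have h2 : Tendsto (fun ε : ℝ => -(ε * c)) atTop atBot :=
      tendsto_neg_atTop_atBot.comp (tendsto_id.atTop_mul_const hc)
    have h3 := Real.tendsto_exp_atBot.comp h2
    have := (h3.div_const c).neg
    simpa using this
  have hcont : ContinuousWithinAt (fun ε : ℝ => -(Real.exp (-(ε * c)) / c)) (Ici 0) 0 := by
    apply Continuous.continuousWithinAt
    continuity
  rw [integral_Ioi_of_hasDerivAt_of_tendsto hcont hderiv (exp_intOn hc) htend]
  simp

lemma gg_nonneg (t : ℝ) : 0 ≤ gg t := sq_nonneg _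

lemma gg_eq (t : ℝ) : gg t = Real.sin (Real.pi * t ^ 2) ^ 2 / (Real.pi * t) ^ 2 := by
  rw [gg, div_pow]

lemma gg_le_one (s : ℝ) : gg s ≤ 1 := by
  rcases eq_or_ne s 0 with rfl | hs
  · rw [gg]; norm_num
  have hps : 0 < (Real.pi * s) ^ 2 := by positivity
  by_cases h : 1 ≤ (Real.pi * s) ^ 2
  · rw [gg_eq]
    calc Real.sin (Real.pi * s ^ 2) ^ 2 / (Real.pi * s) ^ 2
        ≤ 1 / (Real.pi * s) ^ 2 :=
          div_le_div_of_nonneg_right' (Real.sin_sq_le_one _) hps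
      _ ≤ 1 := by rw [div_le_one hps]; exact h
  · push_neg at h
    rw [gg_eq]
    have hexp : (Real.pi * s) ^ 2 = Real.pi ^ 2 * s ^ 2 := by ring
    have hπ2 : (9:ℝ) ≤ Real.pi ^ 2 := by nlinarith [Real.pi_gt_three]
    calc Real.sin (Real.pi * s ^ 2) ^ 2 / (Real.pi * s) ^ 2
        ≤ (Real.pi * s ^ 2) ^ 2 / (Real.pi * s) ^ 2 :=
          div_le_div_of_nonneg_right' Real.sin_sq_le_sq hps
      _ = s ^ 2 := by
          field_simp
      _ ≤ 1 := by nlinarith [sq_nonneg s]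

lemma gg_le_tail {t s : ℝ} (ht : 1 ≤ t) (hts : t ≤ s) :
    gg s ≤ 1 / (Real.pi ^ 2 * t ^ 2) := by
  have hs : (0:ℝ) < s := lt_of_lt_of_le one_pos (ht.trans hts)
  have hps : 0 < (Real.pi * s) ^ 2 := by positivity
  rw [gg_eq]
  calc Real.sin (Real.pi * s ^ 2) ^ 2 / (Real.pi * s) ^ 2
      ≤ 1 / (Real.pi * s) ^ 2 :=
        div_le_div_of_nonneg_right' (Real.sin_sq_le_one _) hps
    _ = 1 / (Real.pi ^ 2 * s ^ 2) := by rw [mul_pow]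
    _ ≤ 1 / (Real.pi ^ 2 * t ^ 2) := by
        apply one_div_le_one_div_of_le (by positivity)
        have : t ^ 2 ≤ s ^ 2 := by nlinarith
        nlinarith [Real.pi_pos]

def bfun (t : ℝ) : ℝ := (Ioc (0:ℝ) 1).indicator (fun _ => (1:ℝ)) t +
  (Ioi (1:ℝ)).indicator (fun t => 1 / (Real.pi ^ 2 * t ^ 2)) t

lemma bfun_nonneg (t : ℝ) : 0 ≤ bfun t := by
  apply add_nonneg
  · apply Set.indicator_nonneg; intro x _; norm_num
  · apply Set.indicator_nonneg; intro x hx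
    have : (1:ℝ) < x := hx
    positivity

lemma bfun_spec {t : ℝ} (ht : 0 < t) {s : ℝ} (hts : t ≤ s) : gg s ≤ bfun t := by
  rw [bfun]
  by_cases h1 : t ≤ 1
  · rw [Set.indicator_of_mem (Set.mem_Ioc.mpr ⟨ht, h1⟩),
      Set.indicator_of_notMem (by simp only [Set.mem_Ioi, not_lt]; exact h1)]
    simpa using gg_le_one s
  · push_neg at h1
    rw [Set.indicator_of_notMem (by simp only [Set.mem_Ioc, not_and, not_le]; exact fun _ => h1),
      Set.indicator_of_mem (Set.mem_Ioi.mpr h1)]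
    simpa using gg_le_tail h1.le hts

lemma bfun_integrable : Integrable bfun := by
  apply Integrable.add
  · rw [integrable_indicator_iff measurableSet_Ioc]
    exact integrableOn_const measure_Ioc_lt_top.ne
  · rw [integrable_indicator_iff measurableSet_Ioi]
    have h2 : IntegrableOn (fun t : ℝ => t ^ (-2 : ℝ)) (Ioi 1) :=
      integrableOn_Ioi_rpow_of_lt (by norm_num) one_pos
    have h3 : IntegrableOn (fun x : ℝ => (Real.pi ^ 2)⁻¹ * x ^ (-2:ℝ)) (Ioi 1) :=
      h2.const_mul _
    apply h3.congr_fun ?_ measurableSet_Ioi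
    intro x hx
    have hx1 : (1:ℝ) < x := hx
    simp only
    rw [Real.rpow_neg (by linarith), Real.rpow_two]
    field_simp

lemma gg_measurable : Measurable gg := by
  apply Measurable.pow_const
  exact (Real.continuous_sin.measurable.comp (by fun_prop)).div (by fun_prop)

lemma gg_integrableOn : IntegrableOn gg (Ioi (0:ℝ)) := by
  apply Integrable.mono' (bfun_integrable.restrict (s := Ioi 0))
    (gg_measurable.aestronglyMeasurable)
  filter_upwards [ae_restrict_mem measurableSet_Ioi] with t ht
  rw [Real.norm_eq_abs, _root_.abs_of_nonneg (gg_nonneg t)]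
  exact bfun_spec ht le_rfl

end ChuAux

namespace ChuAux

lemma kk_nonneg (t ε : ℝ) : 0 ≤ kk t ε := by
  rw [kk]; positivity

lemma expsq_intOn {ε : ℝ} (hε : 0 < ε) :
    IntegrableOn (fun t : ℝ => Real.exp (-(ε * t ^ 2))) (Ioi (0:ℝ)) := by
  simpa [neg_mul] using (integrable_exp_neg_mul_sq hε).integrableOn

lemma kk_e_intOn {t : ℝ} (ht : 0 < t) :
    IntegrableOn (fun ε : ℝ => kk t ε) (Ioi (0:ℝ)) := by
  have h : (fun ε : ℝ => kk t ε) =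
      fun ε : ℝ => Real.sin (Real.pi * t ^ 2) ^ 2 / Real.pi ^ 2 * Real.exp (-(ε * t ^ 2)) := by
    funext ε; rw [kk]; ring
  rw [h]
  exact (exp_intOn (by positivity : (0:ℝ) < t ^ 2)).const_mul _

lemma kk_e_integral {t : ℝ} (ht : 0 < t) : ∫ ε in Ioi (0:ℝ), kk t ε = gg t := by
  have h : (fun ε : ℝ => kk t ε) =
      fun ε : ℝ => Real.sin (Real.pi * t ^ 2) ^ 2 / Real.pi ^ 2 * Real.exp (-(ε * t ^ 2)) := by
    funext ε; rw [kk]; ring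
  rw [h, MeasureTheory.integral_const_mul, exp_integral (by positivity : (0:ℝ) < t ^ 2), gg_eq]
  have hπ : Real.pi ≠ 0 := Real.pi_ne_zero
  have ht' : t ≠ 0 := ht.ne'
  rw [mul_pow]
  rw [div_mul_div_comm, mul_one]

lemma kk_t_intOn {ε : ℝ} (hε : 0 < ε) :
    IntegrableOn (fun t : ℝ => kk t ε) (Ioi (0:ℝ)) := by
  apply Integrable.mono' (expsq_intOn hε)
  · apply Continuous.aestronglyMeasurable
    simp only [kk]
    fun_prop
  · filter_upwards with t
    rw [Real.norm_eq_abs, _root_.abs_of_nonneg (kk_nonneg t ε), kk]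
    have h1 : Real.sin (Real.pi * t ^ 2) ^ 2 ≤ 1 := Real.sin_sq_le_one _
    have h2 : (1:ℝ) ≤ Real.pi ^ 2 := by nlinarith [Real.pi_gt_three]
    have h3 : (0:ℝ) < Real.exp (-(ε * t ^ 2)) := Real.exp_pos _
    rw [div_le_iff₀ (by positivity : (0:ℝ) < Real.pi ^ 2)]
    nlinarith [h3.le]

lemma kk_meas : Measurable fun p : ℝ × ℝ => ENNReal.ofReal (kk p.1 p.2) := by
  apply Measurable.ennreal_ofReal
  apply Continuous.measurable
  simp only [kk]
  fun_prop

lemma gg_integral : ∫ t in Ioi (0:ℝ), gg t = 1 / (2 * Real.pi) := by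
  have key : ENNReal.ofReal (∫ t in Ioi (0:ℝ), gg t)
      = ENNReal.ofReal (1 / (2 * Real.pi)) := by
    rw [MeasureTheory.ofReal_integral_eq_lintegral_ofReal gg_integrableOn
      (Filter.Eventually.of_forall fun t => gg_nonneg t)]
    have h2 : ∫⁻ t in Ioi (0:ℝ), ENNReal.ofReal (gg t)
        = ∫⁻ t in Ioi (0:ℝ), ∫⁻ ε in Ioi (0:ℝ), ENNReal.ofReal (kk t ε) := by
      apply lintegral_congr_ae
      filter_upwards [ae_restrict_mem measurableSet_Ioi] with t ht
      rw [← kk_e_integral ht,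
        MeasureTheory.ofReal_integral_eq_lintegral_ofReal (kk_e_intOn ht)
          (Filter.Eventually.of_forall fun ε => kk_nonneg t ε)]
    rw [h2]
    rw [MeasureTheory.lintegral_lintegral_swap kk_meas.aemeasurable]
    have h4 : ∫⁻ ε in Ioi (0:ℝ), ∫⁻ t in Ioi (0:ℝ), ENNReal.ofReal (kk t ε)
        = ∫⁻ ε in Ioi (0:ℝ), ENNReal.ofReal (Gfun ε) := by
      apply lintegral_congr_ae
      filter_upwards [ae_restrict_mem measurableSet_Ioi] with ε hε
      rw [← MeasureTheory.ofReal_integral_eq_lintegral_ofReal (kk_t_intOn hε)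
        (Filter.Eventually.of_forall fun t => kk_nonneg t ε)]
      rfl
    rw [h4, ← MeasureTheory.ofReal_integral_eq_lintegral_ofReal Gfun_integrableOn]
    · rw [Gfun_integral]
    · filter_upwards [ae_restrict_mem measurableSet_Ioi] with ε hε
      exact Gfun_nonneg ε hε
  have h5 : 0 ≤ ∫ t in Ioi (0:ℝ), gg t :=
    MeasureTheory.setIntegral_nonneg measurableSet_Ioi fun t _ => gg_nonneg t
  have h6 : (0:ℝ) ≤ 1 / (2 * Real.pi) := by positivity
  exact (ENNReal.ofReal_eq_ofReal_iff h5 h6).mp key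

end ChuAux

namespace ChuAux

def Ffun (n : ℕ) : ℝ → ℝ := fun t =>
  ∑ u ∈ Finset.Icc 1 (n / 2),
    (Ioc (((u:ℝ) - 1) / Real.sqrt n) ((u:ℝ) / Real.sqrt n)).indicator
      (fun _ => gg ((u:ℝ) / Real.sqrt n)) t

lemma Ffun_eval {n : ℕ} (hn : 1 ≤ n) {t : ℝ} (ht : 0 < t) :
    Ffun n t = if ⌈t * Real.sqrt n⌉₊ ≤ n / 2 then
      gg ((⌈t * Real.sqrt n⌉₊ : ℝ) / Real.sqrt n) else 0 := by
  have hsn : (0:ℝ) < Real.sqrt n := Real.sqrt_pos.mpr (by exact_mod_cast hn)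
  have htn : 0 < t * Real.sqrt n := mul_pos ht hsn
  set m := ⌈t * Real.sqrt n⌉₊ with hm_def
  have hm1 : 1 ≤ m := Nat.one_le_iff_ne_zero.mpr (Nat.ceil_pos.mpr htn).ne'
  have hiff : ∀ u : ℕ, 1 ≤ u →
      (t ∈ Ioc (((u:ℝ) - 1) / Real.sqrt n) ((u:ℝ) / Real.sqrt n) ↔ m = u) := by
    intro u hu
    rw [Set.mem_Ioc, div_lt_iff₀ hsn, le_div_iff₀ hsn, hm_def,
      Nat.ceil_eq_iff (Nat.one_le_iff_ne_zero.mp hu), Nat.cast_sub hu, Nat.cast_one]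
  by_cases hm : m ≤ n / 2
  · rw [if_pos hm, Ffun]
    rw [Finset.sum_eq_single_of_mem m (Finset.mem_Icc.mpr ⟨hm1, hm⟩)]
    · exact Set.indicator_of_mem ((hiff m hm1).mpr rfl) _
    · intro u hu hne
      apply Set.indicator_of_notMem
      intro hmem
      exact hne ((hiff u (Finset.mem_Icc.mp hu).1).mp hmem).symm
  · rw [if_neg hm, Ffun]
    apply Finset.sum_eq_zero
    intro u hu
    apply Set.indicator_of_notMem
    intro hmem
    have := (hiff u (Finset.mem_Icc.mp hu).1).mp hmem
    exact hm (this ▸ (Finset.mem_Icc.mp hu).2)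

lemma Ffun_nonpos {n : ℕ} {t : ℝ} (ht : t ≤ 0) : Ffun n t = 0 := by
  rw [Ffun]
  apply Finset.sum_eq_zero
  intro u hu
  apply Set.indicator_of_notMem
  intro hmem
  have h1 : ((u:ℝ) - 1) / Real.sqrt n < t := hmem.1
  have hu1 : 1 ≤ u := (Finset.mem_Icc.mp hu).1
  have h2 : (0:ℝ) ≤ ((u:ℝ) - 1) / Real.sqrt n := by
    apply div_nonneg _ (Real.sqrt_nonneg _)
    have : (1:ℝ) ≤ (u:ℝ) := by exact_mod_cast hu1
    linarith
  linarith

lemma Ffun_integrable (n : ℕ) : Integrable (Ffun n) := by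
  apply integrable_finset_sum
  intro u _
  rw [integrable_indicator_iff measurableSet_Ioc]
  exact integrableOn_const measure_Ioc_lt_top.ne

lemma Ffun_le_bound (n : ℕ) : ∀ᵐ t : ℝ, ‖Ffun n t‖ ≤ bfun t := by
  have h0 : ∀ᵐ t : ℝ, t ≠ 0 := by
    refine MeasureTheory.ae_iff.mpr ?_
    have : {t : ℝ | ¬ t ≠ 0} = {0} := by ext t; simp
    rw [this]
    exact Real.volume_singleton
  filter_upwards [h0] with t ht
  rcases lt_or_gt_of_ne ht with hlt | hgt
  · rw [Ffun_nonpos hlt.le, norm_zero]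
    exact bfun_nonneg t
  rcases Nat.eq_zero_or_pos n with rfl | hn
  · rw [show Ffun 0 t = 0 by rw [Ffun]; simp, norm_zero]
    exact bfun_nonneg t
  rw [Ffun_eval hn hgt]
  split_ifs with hif
  · have hsn : (0:ℝ) < Real.sqrt n := Real.sqrt_pos.mpr (by exact_mod_cast hn)
    have hle : t ≤ (⌈t * Real.sqrt n⌉₊ : ℝ) / Real.sqrt n :=
      (le_div_iff₀ hsn).mpr (Nat.le_ceil _)
    rw [Real.norm_eq_abs, _root_.abs_of_nonneg (gg_nonneg _)]
    exact bfun_spec hgt hle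
  · rw [norm_zero]
    exact bfun_nonneg t

lemma Ffun_tendsto_ae : ∀ᵐ t : ℝ,
    Tendsto (fun n => Ffun n t) atTop (𝓝 ((Ioi (0:ℝ)).indicator gg t)) := by
  have h0 : ∀ᵐ t : ℝ, t ≠ 0 := by
    refine MeasureTheory.ae_iff.mpr ?_
    have : {t : ℝ | ¬ t ≠ 0} = {0} := by ext t; simp
    rw [this]
    exact Real.volume_singleton
  filter_upwards [h0] with t ht
  have hsqn : Tendsto (fun n : ℕ => Real.sqrt n) atTop atTop := by
    have hsq : Tendsto Real.sqrt atTop atTop := by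
      have h := tendsto_rpow_atTop (y := (1/2 : ℝ)) (by norm_num)
      exact h.congr fun x => (Real.sqrt_eq_rpow x).symm
    exact hsq.comp tendsto_natCast_atTop_atTop
  rcases lt_or_gt_of_ne ht with hlt | hgt
  · rw [Set.indicator_of_notMem (by simp [Set.mem_Ioi]; linarith)]
    apply Tendsto.congr (fun n => (Ffun_nonpos hlt.le).symm)
    exact tendsto_const_nhds
  rw [Set.indicator_of_mem (Set.mem_Ioi.mpr hgt)]
  have hc : Tendsto (fun n : ℕ => (⌈t * Real.sqrt n⌉₊ : ℝ) / Real.sqrt n) atTop (𝓝 t) := by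
    have hup : Tendsto (fun n : ℕ => t + 1 / Real.sqrt n) atTop (𝓝 t) := by
      have h1 : Tendsto (fun n : ℕ => 1 / Real.sqrt n) atTop (𝓝 0) := by
        simpa [one_div, Pi.inv_def] using hsqn.inv_tendsto_atTop
      simpa using tendsto_const_nhds.add h1
    apply tendsto_of_tendsto_of_tendsto_of_le_of_le' tendsto_const_nhds hup
    · filter_upwards [hsqn.eventually_gt_atTop 0] with n hsn
      exact (le_div_iff₀ hsn).mpr (Nat.le_ceil _)
    · filter_upwards [hsqn.eventually_gt_atTop 0] with n hsn
      rw [div_le_iff₀ hsn]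
      have := Nat.ceil_lt_add_one (by positivity : (0:ℝ) ≤ t * Real.sqrt n)
      calc (⌈t * Real.sqrt n⌉₊ : ℝ) ≤ t * Real.sqrt n + 1 := this.le
        _ = (t + 1 / Real.sqrt n) * Real.sqrt n := by field_simp
  have hgg : ContinuousAt gg t := by
    have hne : Real.pi * t ≠ 0 := by positivity
    apply ContinuousAt.pow
    exact ContinuousAt.div (by fun_prop) (by fun_prop) hne
  have htend := (hgg.tendsto.comp hc :
    Tendsto (fun n : ℕ => gg ((⌈t * Real.sqrt n⌉₊ : ℝ) / Real.sqrt n)) atTop (𝓝 (gg t)))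
  apply htend.congr'
  have hev : ∀ᶠ n : ℕ in atTop, ⌈t * Real.sqrt n⌉₊ ≤ n / 2 := by
    filter_upwards [hsqn.eventually_ge_atTop (2 * t + 2), eventually_ge_atTop 1] with n hs hn1
    rw [Nat.ceil_le]
    have hcast : (n:ℝ) ≤ 2 * ((n / 2 : ℕ) : ℝ) + 1 := by
      have : n ≤ 2 * (n / 2) + 1 := by omega
      exact_mod_cast this
    have hsq2 : Real.sqrt n ^ 2 = (n:ℝ) := Real.sq_sqrt (Nat.cast_nonneg n)
    nlinarith [hs, hsq2, hcast, hgt]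
  filter_upwards [hev, eventually_ge_atTop 1] with n h1 h2
  rw [Ffun_eval h2 hgt, if_pos h1]
  rfl

lemma rpow_neg_threehalf {n : ℕ} (hn : 1 ≤ n) :
    (n:ℝ) ^ (-(3/2 : ℝ)) = 1 / ((n:ℝ) * Real.sqrt n) := by
  have hnpos : (0:ℝ) < n := by exact_mod_cast hn
  rw [Real.rpow_neg hnpos.le, show (3/2 : ℝ) = 1 + 1/2 by norm_num,
    Real.rpow_add hnpos, Real.rpow_one, ← Real.sqrt_eq_rpow, one_div]

lemma Ffun_integral {n : ℕ} (hn : 1 ≤ n) :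
    ∫ t, Ffun n t = (n:ℝ) ^ (-(3/2 : ℝ)) *
      ∑ u ∈ Finset.Icc 1 (n / 2),
        (Real.sin (Real.pi * u ^ 2 / n) / (Real.pi * u / n)) ^ 2 := by
  have hsn : (0:ℝ) < Real.sqrt n := Real.sqrt_pos.mpr (by exact_mod_cast hn)
  have hnpos : (0:ℝ) < n := by exact_mod_cast hn
  have hInt : ∀ u ∈ Finset.Icc 1 (n / 2), Integrable (fun t : ℝ =>
      (Ioc (((u:ℝ) - 1) / Real.sqrt n) ((u:ℝ) / Real.sqrt n)).indicator
        (fun _ => gg ((u:ℝ) / Real.sqrt n)) t) := by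
    intro u _
    rw [integrable_indicator_iff measurableSet_Ioc]
    exact integrableOn_const measure_Ioc_lt_top.ne
  simp only [Ffun]
  rw [integral_finset_sum _ hInt, Finset.mul_sum]
  apply Finset.sum_congr rfl
  intro u hu
  have hu1 : (1:ℝ) ≤ (u:ℝ) := by exact_mod_cast (Finset.mem_Icc.mp hu).1
  have hu0 : (0:ℝ) < (u:ℝ) := by linarith
  rw [integral_indicator_const _ measurableSet_Ioc, measureReal_def, Real.volume_Ioc,
    show (u:ℝ) / Real.sqrt n - ((u:ℝ) - 1) / Real.sqrt n = 1 / Real.sqrt n by field_simp; ring,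
    ENNReal.toReal_ofReal (by positivity), smul_eq_mul, rpow_neg_threehalf hn, gg]
  have harg : Real.pi * ((u:ℝ) / Real.sqrt n) ^ 2 = Real.pi * (u:ℝ) ^ 2 / (n:ℝ) := by
    rw [div_pow, Real.sq_sqrt (Nat.cast_nonneg n)]
    ring
  rw [harg]
  have hsq : Real.sqrt n * Real.sqrt n = (n:ℝ) := Real.mul_self_sqrt (Nat.cast_nonneg n)
  have hπ : Real.pi ≠ 0 := Real.pi_ne_zero
  field_simp
  ring_nf
  linear_combination (Real.sin (Real.pi * (u:ℝ) ^ 2 * ((n:ℝ))⁻¹) ^ 2) * hsq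

end ChuAux


/-- the limit of n^(-3/2) * sum over 1 <= u <= n/2 of
(sin(pi u^2/n) / (pi u/n))^2 is 1/(2 pi). -/
theorem chu_sum_linear_tendsto :
    Tendsto (fun n : ℕ => (n : ℝ) ^ (-(3 / 2 : ℝ)) *
        ∑ u ∈ Finset.Icc 1 (n / 2),
          (Real.sin (Real.pi * u ^ 2 / n) / (Real.pi * u / n)) ^ 2)
      atTop (𝓝 (1 / (2 * Real.pi))) := by
  have dct := MeasureTheory.tendsto_integral_of_dominated_convergence (μ := volume) ChuAux.bfun
    (fun n => (ChuAux.Ffun_integrable n).aestronglyMeasurable) ChuAux.bfun_integrable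
    ChuAux.Ffun_le_bound ChuAux.Ffun_tendsto_ae
  rw [MeasureTheory.integral_indicator measurableSet_Ioi, ChuAux.gg_integral] at dct
  apply dct.congr'
  filter_upwards [Filter.eventually_ge_atTop 1] with n hn
  exact ChuAux.Ffun_integral hn
end
end

section
/- The limit as m tends to infinity of (1/m²) · Σ_{v=1}^{m} ( cos(π(2v−1)²/(4m)) / cos(π(2v−1)/(4m)) )² equals 2. -/
open Complex Real Filter Topology

noncomputable section

section CosSumAux
open Finset

private def ww (n k : ℕ) : ℂ := Complex.exp (Real.pi * Complex.I * (2 * k + 1) / n)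

private lemma ww_pow (n k j : ℕ) (hn : (n:ℂ) ≠ 0) :
    ww n k ^ j = Complex.exp (Real.pi * Complex.I * j / n) *
      Complex.exp (2 * Real.pi * Complex.I * j / n) ^ k := by
  rw [ww, ← Complex.exp_nat_mul, ← Complex.exp_nat_mul, ← Complex.exp_add]
  congr 1
  field_simp
  ring

private lemma g_not_dvd (n j : ℕ) (hn : 0 < n) (hj0 : j ≠ 0) (hjn : j ≠ n) (hj2 : j < 2 * n) :
    ∑ k ∈ range n, ww n k ^ j = 0 := by
  have hn' : (n:ℂ) ≠ 0 := Nat.cast_ne_zero.mpr hn.ne'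
  have hpi : (Real.pi : ℂ) ≠ 0 := by exact_mod_cast Real.pi_ne_zero
  have hr1 : Complex.exp (2 * Real.pi * Complex.I * j / n) ≠ 1 := by
    intro h
    rw [Complex.exp_eq_one_iff] at h
    obtain ⟨t, ht⟩ := h
    have hjc : (j : ℂ) = t * n := by
      field_simp at ht
      linear_combination ht
    have hjz : (j : ℤ) = t * n := by exact_mod_cast hjc
    have hdvd : n ∣ j := by
      have : (n : ℤ) ∣ (j : ℤ) := ⟨t, by linarith⟩
      exact_mod_cast this
    obtain ⟨q, rfl⟩ := hdvd
    have hq2 : q < 2 := by nlinarith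
    interval_cases q <;> omega
  have hrn : Complex.exp (2 * Real.pi * Complex.I * j / n) ^ n = 1 := by
    rw [← Complex.exp_nat_mul]
    have : (n : ℂ) * (2 * Real.pi * Complex.I * j / n) = (j : ℤ) * (2 * Real.pi * Complex.I) := by
      field_simp; push_cast; ring
    rw [this, Complex.exp_int_mul_two_pi_mul_I]
  calc ∑ k ∈ range n, ww n k ^ j
      = Complex.exp (Real.pi * Complex.I * j / n) *
        ∑ k ∈ range n, Complex.exp (2 * Real.pi * Complex.I * j / n) ^ k := by
        rw [Finset.mul_sum]; exact Finset.sum_congr rfl fun k _ => ww_pow n k j hn'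
    _ = 0 := by rw [geom_sum_eq hr1, hrn]; simp

private lemma ww_pow_n (n k : ℕ) (hn : 0 < n) : ww n k ^ n = -1 := by
  have hn' : (n:ℂ) ≠ 0 := Nat.cast_ne_zero.mpr hn.ne'
  rw [ww, ← Complex.exp_nat_mul]
  have : (n : ℂ) * (Real.pi * Complex.I * (2 * k + 1) / n) =
      (k : ℤ) * (2 * Real.pi * Complex.I) + Real.pi * Complex.I := by
    field_simp; push_cast; ring
  rw [this, Complex.exp_add, Complex.exp_int_mul_two_pi_mul_I, one_mul,
    Complex.exp_pi_mul_I]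

private def qq (n k : ℕ) : ℂ := ∑ j ∈ range n, ww n k ^ j

private lemma qq_mul (n k : ℕ) (hn : 0 < n) : qq n k * (1 - ww n k) = 2 := by
  have := geom_sum_mul (ww n k) n
  rw [ww_pow_n n k hn] at this
  have h2 : qq n k * (ww n k - 1) = -2 := by rw [qq]; rw [this]; ring
  linear_combination -h2

private lemma Gval (n t : ℕ) (hn : 0 < n) (ht : t < 2*n) :
    ∑ k ∈ range n, ww n k ^ t = if t = 0 then (n:ℂ) else if t = n then -n else 0 := by
  by_cases h0 : t = 0
  · simp [h0]
  · by_cases hn' : t = n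
    · rw [if_neg h0, if_pos hn',
        Finset.sum_congr rfl fun k _ => (show ww n k ^ t = -1 by rw [hn']; exact ww_pow_n n k hn)]
      simp
    · rw [if_neg h0, if_neg hn']
      exact g_not_dvd n t hn h0 hn' ht

private lemma S1 (n : ℕ) (hn : 0 < n) : ∑ k ∈ range n, qq n k = n := by
  unfold qq
  rw [Finset.sum_comm]
  have : ∀ j ∈ range n, ∑ k ∈ range n, ww n k ^ j =
      if j = 0 then (n:ℂ) else if j = n then -(n:ℂ) else 0 := by
    intro j hj
    simp only [Finset.mem_range] at hj
    exact Gval n j hn (by omega)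
  rw [Finset.sum_congr rfl this]
  have : ∀ j ∈ range n, (if j = 0 then (n:ℂ) else if j = n then -(n:ℂ) else 0) =
      if j = 0 then (n:ℂ) else 0 := by
    intro j hj
    simp only [Finset.mem_range] at hj
    split_ifs with h1 h2
    · rfl
    · omega
    · rfl
  rw [Finset.sum_congr rfl this, Finset.sum_ite_eq' (range n) 0 (fun _ => (n:ℂ))]
  simp [hn]

private lemma S2 (n : ℕ) (hn : 0 < n) : ∑ k ∈ range n, (qq n k)^2 = 2*n - n^2 := by
  have key : ∀ k ∈ range n, (qq n k)^2 = ∑ j ∈ range n, ∑ l ∈ range n, ww n k ^ (j + l) := by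
    intro k _
    rw [qq, sq, Finset.sum_mul_sum]
    simp [pow_add]
  rw [Finset.sum_congr rfl key, Finset.sum_comm]
  have swap2 : ∀ j ∈ range n, ∑ k ∈ range n, ∑ l ∈ range n, ww n k ^ (j + l) =
      ∑ l ∈ range n, ∑ k ∈ range n, ww n k ^ (j + l) := fun j _ => Finset.sum_comm
  rw [Finset.sum_congr rfl swap2]
  have inner : ∀ j ∈ range n, (∑ l ∈ range n, ∑ k ∈ range n, ww n k ^ (j + l)) =
      if j = 0 then (n:ℂ) else -n := by
    intro j hj
    simp only [Finset.mem_range] at hj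
    have hG : ∀ l ∈ range n, ∑ k ∈ range n, ww n k ^ (j + l) =
        if j + l = 0 then (n:ℂ) else if j + l = n then -(n:ℂ) else 0 := by
      intro l hl
      simp only [Finset.mem_range] at hl
      exact Gval n (j+l) hn (by omega)
    rw [Finset.sum_congr rfl hG]
    by_cases hj0 : j = 0
    · subst hj0
      have : ∀ l ∈ range n, (if 0 + l = 0 then (n:ℂ) else if 0 + l = n then -(n:ℂ) else 0) =
          if l = 0 then (n:ℂ) else 0 := by
        intro l hl
        simp only [Finset.mem_range] at hl
        split_ifs <;> first | rfl | omega
      rw [Finset.sum_congr rfl this, Finset.sum_ite_eq' (range n) 0 (fun _ => (n:ℂ))]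
      simp [hn]
    · rw [if_neg hj0]
      have : ∀ l ∈ range n, (if j + l = 0 then (n:ℂ) else if j + l = n then -(n:ℂ) else 0) =
          if l = n - j then -(n:ℂ) else 0 := by
        intro l hl
        simp only [Finset.mem_range] at hl
        split_ifs <;> first | rfl | omega
      rw [Finset.sum_congr rfl this, Finset.sum_ite_eq' (range n) (n-j) (fun _ => -(n:ℂ))]
      simp only [Finset.mem_range]
      rw [if_pos (by omega)]
  rw [Finset.sum_congr rfl inner]
  have : ∀ j ∈ range n, (if j = 0 then (n:ℂ) else -n) =
      -n + (if j = 0 then (2*n:ℂ) else 0) := by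
    intro j _
    split_ifs <;> ring
  rw [Finset.sum_congr rfl this, Finset.sum_add_distrib,
    Finset.sum_ite_eq' (range n) 0 (fun _ => (2*n:ℂ))]
  simp only [Finset.mem_range, Finset.sum_const, Finset.card_range, nsmul_eq_mul]
  rw [if_pos hn]
  ring

private lemma sin_alg (θ : ℝ) :
    4 * Complex.exp (2*θ*Complex.I) * (Complex.sin θ)^2 = -(1 - Complex.exp (2*θ*Complex.I))^2 := by
  rw [Complex.sin, show (-(θ:ℂ) * Complex.I) = -((θ:ℂ)*Complex.I) by ring]
  have h2 : Complex.exp (2*θ*Complex.I) = Complex.exp (θ*Complex.I) ^ 2 := by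
    rw [sq, ← Complex.exp_add]; ring_nf
  have hneg : Complex.exp (-((θ:ℂ)*Complex.I)) = (Complex.exp ((θ:ℂ)*Complex.I))⁻¹ := by
    rw [← Complex.exp_neg]
  rw [h2]
  rw [hneg]
  have hne := Complex.exp_ne_zero ((θ:ℂ)*Complex.I)
  field_simp
  ring_nf
  rw [Complex.I_sq]
  ring

private lemma csc_eq (n k : ℕ) (hn : 0 < n) :
    ((Real.sin (Real.pi * (2*k+1) / (2*n)) : ℂ))^2 * (2 * qq n k - (qq n k)^2) = 1 := by
  have hn' : (n:ℂ) ≠ 0 := Nat.cast_ne_zero.mpr hn.ne'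
  set θ : ℝ := Real.pi * (2*k+1) / (2*n) with hθ
  have hw : ww n k = Complex.exp (2*θ*Complex.I) := by
    rw [ww]; congr 1; push_cast [hθ]; field_simp
  have h2 := sin_alg θ
  rw [← hw] at h2
  rw [← Complex.ofReal_sin] at h2
  have h1 := qq_mul n k hn
  set q := qq n k
  set w := ww n k
  set S := ((Real.sin θ : ℂ))^2
  have hwne : w ≠ 0 := by rw [hw]; exact Complex.exp_ne_zero _
  have hq2 : 2*q - q^2 = -(q^2) * w := by linear_combination -q * h1
  have hwS : w * S = -(1-w)^2/4 := by linear_combination h2/4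
  calc S * (2*q - q^2) = -(q^2) * (w * S) := by rw [hq2]; ring
    _ = (q*(1-w))^2/4 := by rw [hwS]; ring
    _ = 1 := by rw [h1]; norm_num

private lemma csc_sum (n : ℕ) (hn : 0 < n) :
    ∑ k ∈ range n, (1 / Real.sin (Real.pi * (2*k+1) / (2*n)))^2 = (n:ℝ)^2 := by
  have hsin : ∀ k ∈ range n, Real.sin (Real.pi * (2*k+1) / (2*n)) ≠ 0 := by
    intro k hk
    simp only [Finset.mem_range] at hk
    have h1 : 0 < Real.pi * (2*k+1) / (2*n) := by positivity
    have h2 : Real.pi * (2*k+1) / (2*n) < Real.pi := by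
      rw [div_lt_iff₀ (by positivity)]
      have : (2*(k:ℝ)+1) < 2*n := by push_cast; exact_mod_cast (by omega : 2*k+1 < 2*n)
      nlinarith [Real.pi_pos]
    exact (Real.sin_pos_of_pos_of_lt_pi h1 h2).ne'
  have hC : ∑ k ∈ range n, (((1 / Real.sin (Real.pi * (2*k+1) / (2*n)))^2 : ℝ) : ℂ) = (n:ℂ)^2 := by
    have term : ∀ k ∈ range n, (((1 / Real.sin (Real.pi * (2*k+1) / (2*n)))^2 : ℝ) : ℂ) =
        2 * qq n k - (qq n k)^2 := by
      intro k hk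
      have h := csc_eq n k hn
      have hsk : ((Real.sin (Real.pi * (2*k+1) / (2*n)) : ℝ) : ℂ) ≠ 0 := by
        exact_mod_cast Complex.ofReal_ne_zero.mpr (hsin k hk)
      rw [Complex.ofReal_pow, Complex.ofReal_div, Complex.ofReal_one, div_pow, one_pow,
        div_eq_iff (pow_ne_zero 2 hsk)]
      linear_combination -h
    rw [Finset.sum_congr rfl term, Finset.sum_sub_distrib, ← Finset.mul_sum, S1 n hn, S2 n hn]
    ring
  have := hC
  rw [← Complex.ofReal_sum] at this
  exact_mod_cast this

private lemma csc_sum_half (m : ℕ) (hm : 0 < m) :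
    ∑ k ∈ range m, (1 / Real.sin (Real.pi * (2*k+1) / (4*m)))^2 = 2*(m:ℝ)^2 := by
  have h := csc_sum (2*m) (by omega)
  have hden : ∀ k : ℕ, Real.pi * (2*k+1) / (2*(2*m:ℕ)) = Real.pi * (2*k+1) / (4*m) := by
    intro k; push_cast; ring_nf
  simp only [hden] at h
  rw [Finset.range_eq_Ico, ← Finset.sum_Ico_consecutive _ (Nat.zero_le m) (by omega : m ≤ 2*m)]
    at h
  have hsym : ∑ k ∈ Finset.Ico m (2*m), (1 / Real.sin (Real.pi * (2*k+1) / (4*m)))^2 =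
      ∑ k ∈ Finset.Ico 0 m, (1 / Real.sin (Real.pi * (2*k+1) / (4*m)))^2 := by
    apply Finset.sum_nbij' (fun i => 2*m-1-i) (fun j => 2*m-1-j)
    · intro a ha; simp only [Finset.mem_Ico] at *; omega
    · intro a ha; simp only [Finset.mem_Ico] at *; omega
    · intro a ha; simp only [Finset.mem_Ico] at ha; omega
    · intro a ha; simp only [Finset.mem_Ico] at ha; omega
    · intro a ha
      simp only [Finset.mem_Ico] at ha
      have hc : ((2*m-1-a : ℕ) : ℝ) = 2*m-1-a := by
        have : a ≤ 2*m-1 := by omega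
        push_cast [Nat.cast_sub this, Nat.cast_sub (by omega : 1 ≤ 2*m)]
        ring
      have harg : Real.pi * (2*(2*m-1-a:ℕ)+1) / (4*m) =
          Real.pi - Real.pi * (2*a+1) / (4*m) := by
        rw [hc]
        have hm' : (m:ℝ) ≠ 0 := Nat.cast_ne_zero.mpr hm.ne'
        field_simp
        ring
      rw [harg, Real.sin_pi_sub]
  rw [hsym] at h
  have : (2:ℝ) * ∑ k ∈ Finset.Ico 0 m, (1 / Real.sin (Real.pi * (2*k+1) / (4*m)))^2
      = ((2*m:ℕ):ℝ)^2 := by rw [← h]; ring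
  rw [← Finset.range_eq_Ico] at this
  push_cast at this
  linarith

private lemma cos_sq_shift (x : ℝ) (t : ℤ) : Real.cos (x + t * Real.pi) ^ 2 = Real.cos x ^ 2 := by
  rw [Real.cos_sq, Real.cos_sq]
  congr 1
  rw [show 2*(x + t*Real.pi) = 2*x + t*(2*Real.pi) by ring, Real.cos_add_int_mul_two_pi]

private lemma main_sum_eq (m : ℕ) (hm : 0 < m) :
    ∑ v ∈ Finset.Icc 1 m,
        (Real.cos (Real.pi * (2 * v - 1) ^ 2 / (4 * m)) /
          Real.cos (Real.pi * (2 * v - 1) / (4 * m))) ^ 2 =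
    ∑ k ∈ range m,
        Real.cos (Real.pi * (2*k+1)^2 / (4*m)) ^ 2 / Real.sin (Real.pi * (2*k+1) / (4*m)) ^ 2 := by
  have hm' : (m:ℝ) ≠ 0 := Nat.cast_ne_zero.mpr hm.ne'
  apply Finset.sum_nbij' (fun v => m - v) (fun k => m - k)
  · intro a ha; simp only [Finset.mem_Icc, Finset.mem_range] at *; omega
  · intro a ha; simp only [Finset.mem_Icc, Finset.mem_range] at *; omega
  · intro a ha; simp only [Finset.mem_Icc] at ha; omega
  · intro a ha; simp only [Finset.mem_range] at ha; omega
  · intro v hv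
    simp only [Finset.mem_Icc] at hv
    have hc : ((m - v : ℕ) : ℝ) = m - v := by
      push_cast [Nat.cast_sub hv.2]; ring
    have hden : Real.pi * (2 * (v:ℝ) - 1) / (4 * m) =
        Real.pi / 2 - Real.pi * (2*((m-v:ℕ):ℝ)+1) / (4*m) := by
      rw [hc]; field_simp; ring
    have hnum : Real.pi * (2 * (v:ℝ) - 1)^2 / (4 * m) =
        Real.pi * (2*((m-v:ℕ):ℝ)+1)^2 / (4*m) + ((2*(v:ℤ) - m - 1 : ℤ) : ℝ) * Real.pi := by
      rw [hc]; push_cast; field_simp; ring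
    rw [div_pow, hden, Real.cos_pi_div_two_sub, hnum, cos_sq_shift]

private lemma term_le (m k : ℕ) (hm : 0 < m) (hk : k < m) :
    Real.sin (Real.pi*(2*k+1)^2/(4*m))^2 / Real.sin (Real.pi*(2*k+1)/(4*m))^2
      ≤ Real.pi^2*(2*k+1)^2/4 ∧
    Real.sin (Real.pi*(2*k+1)^2/(4*m))^2 / Real.sin (Real.pi*(2*k+1)/(4*m))^2
      ≤ 4*(m:ℝ)^2/(2*k+1)^2 := by
  have hm' : (m:ℝ) ≠ 0 := Nat.cast_ne_zero.mpr hm.ne'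
  set y : ℝ := Real.pi*(2*k+1)/(4*m) with hy
  set z : ℝ := Real.pi*(2*k+1)^2/(4*m) with hz
  have hy0 : 0 < y := by rw [hy]; positivity
  have hy2 : y ≤ Real.pi/2 := by
    rw [hy, div_le_div_iff₀ (by positivity) two_pos]
    have h1 : (2*(k:ℝ)+1) ≤ 2*m := by
      have : (2*k+1 : ℕ) ≤ 2*m := by omega
      exact_mod_cast this
    nlinarith [Real.pi_pos]
  have hsy : (2*(k:ℝ)+1)/(2*m) ≤ Real.sin y := by
    have h := Real.mul_le_sin hy0.le hy2
    have : 2/Real.pi * y = (2*(k:ℝ)+1)/(2*m) := by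
      rw [hy]; field_simp [Real.pi_ne_zero]; ring
    linarith [this ▸ h]
  have hc0 : (0:ℝ) < (2*(k:ℝ)+1)/(2*m) := by positivity
  have hmain : ∀ N : ℝ, 0 ≤ N → Real.sin z ^2 ≤ N →
      Real.sin z ^2 / Real.sin y ^2 ≤ N / ((2*(k:ℝ)+1)/(2*m))^2 := by
    intro N hN0 hN
    exact div_le_div₀ hN0 hN (by positivity) (by nlinarith)
  constructor
  · have h1 := hmain (z^2) (sq_nonneg z) (Real.sin_sq_le_sq)
    calc Real.sin z ^2 / Real.sin y ^2 ≤ z^2 / ((2*(k:ℝ)+1)/(2*m))^2 := h1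
      _ = Real.pi^2*(2*k+1)^2/4 := by rw [hz]; field_simp; ring
  · have h1 := hmain 1 zero_le_one (Real.sin_sq_le_one z)
    calc Real.sin z ^2 / Real.sin y ^2 ≤ 1 / ((2*(k:ℝ)+1)/(2*m))^2 := h1
      _ = 4*(m:ℝ)^2/(2*k+1)^2 := by field_simp; ring

private lemma Em_le (m : ℕ) (hm : 0 < m) :
    ∑ k ∈ range m, Real.sin (Real.pi*(2*k+1)^2/(4*m))^2 / Real.sin (Real.pi*(2*k+1)/(4*m))^2
      ≤ (Real.pi^2 + 8) * m * Real.sqrt m := by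
  set s := Nat.sqrt m with hs
  have hsm : s ≤ m := Nat.sqrt_le_self m
  have hs2 : ((s:ℝ))^2 ≤ m := by exact_mod_cast (by simpa [pow_two] using Nat.sqrt_le m : s^2 ≤ m)
  have hss : (s:ℝ) ≤ Real.sqrt m := (Real.le_sqrt (by positivity) (by positivity)).mpr hs2
  have hsucc : Real.sqrt m ≤ (s:ℝ) + 1 := by
    have h1 : (m:ℝ) ≤ ((s:ℝ)+1)^2 := by
      have h0 : m ≤ (s+1)^2 := le_of_lt (by simpa [Nat.succ_eq_add_one] using Nat.lt_succ_sqrt' m)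
      exact_mod_cast h0
    calc Real.sqrt m ≤ Real.sqrt (((s:ℝ)+1)^2) := Real.sqrt_le_sqrt h1
      _ = (s:ℝ)+1 := Real.sqrt_sq (by positivity)
  rw [Finset.range_eq_Ico, ← Finset.sum_Ico_consecutive _ (Nat.zero_le s) hsm]
  have hlow : ∑ k ∈ Finset.Ico 0 s, Real.sin (Real.pi*(2*k+1)^2/(4*m))^2 /
      Real.sin (Real.pi*(2*k+1)/(4*m))^2 ≤ Real.pi^2 * s^3 := by
    have hB : ∀ k ∈ Finset.Ico 0 s, Real.sin (Real.pi*(2*k+1)^2/(4*m))^2 /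
        Real.sin (Real.pi*(2*k+1)/(4*m))^2 ≤ Real.pi^2 * s^2 := by
      intro k hk
      simp only [Finset.mem_Ico] at hk
      have h1 := (term_le m k hm (by omega)).1
      have h2 : (2*(k:ℝ)+1)^2 ≤ (2*(s:ℝ))^2 := by
        have : (2*k+1 : ℕ) ≤ 2*s := by omega
        have hc : (2*(k:ℝ)+1) ≤ 2*s := by exact_mod_cast this
        nlinarith
      nlinarith [sq_nonneg Real.pi]
    calc _ ≤ ∑ _k ∈ Finset.Ico 0 s, Real.pi^2 * (s:ℝ)^2 := Finset.sum_le_sum hB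
      _ = s * (Real.pi^2 * s^2) := by rw [Finset.sum_const]; simp [Nat.card_Ico]
      _ = Real.pi^2 * s^3 := by ring
  have hhigh : ∑ k ∈ Finset.Ico s m, Real.sin (Real.pi*(2*k+1)^2/(4*m))^2 /
      Real.sin (Real.pi*(2*k+1)/(4*m))^2 ≤ 8*(m:ℝ)^2/((s:ℝ)+1) := by
    have hB : ∀ k ∈ Finset.Ico s m, Real.sin (Real.pi*(2*k+1)^2/(4*m))^2 /
        Real.sin (Real.pi*(2*k+1)/(4*m))^2 ≤ 4*(m:ℝ)^2 * (((k:ℝ)+1)^2)⁻¹ := by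
      intro k hk
      simp only [Finset.mem_Ico] at hk
      have h1 := (term_le m k hm hk.2).2
      have h2 : 4*(m:ℝ)^2/(2*(k:ℝ)+1)^2 ≤ 4*(m:ℝ)^2/((k:ℝ)+1)^2 := by
        apply div_le_div_of_nonneg_left (by positivity) (by positivity)
        nlinarith [Nat.cast_nonneg (α := ℝ) k]
      calc _ ≤ 4*(m:ℝ)^2/(2*(k:ℝ)+1)^2 := h1
        _ ≤ 4*(m:ℝ)^2/((k:ℝ)+1)^2 := h2
        _ = 4*(m:ℝ)^2 * (((k:ℝ)+1)^2)⁻¹ := by rw [div_eq_mul_inv]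
    calc _ ≤ ∑ k ∈ Finset.Ico s m, 4*(m:ℝ)^2 * (((k:ℝ)+1)^2)⁻¹ := Finset.sum_le_sum hB
      _ = 4*(m:ℝ)^2 * ∑ k ∈ Finset.Ico s m, (((k:ℝ)+1)^2)⁻¹ := by rw [Finset.mul_sum]
      _ ≤ 4*(m:ℝ)^2 * (2/((s:ℝ)+1)) := by
          apply mul_le_mul_of_nonneg_left _ (by positivity)
          have hre : ∑ k ∈ Finset.Ico s m, (((k:ℝ)+1)^2)⁻¹ =
              ∑ i ∈ Finset.Ico (s+1) (m+1), (((i:ℝ))^2)⁻¹ := by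
            apply Finset.sum_nbij' (fun k => k+1) (fun i => i-1)
            · intro a ha; simp only [Finset.mem_Ico] at *; omega
            · intro a ha; simp only [Finset.mem_Ico] at *; omega
            · intro a _; omega
            · intro a ha; simp only [Finset.mem_Ico] at ha; omega
            · intro a _; push_cast; ring_nf
          rw [hre, Finset.Ico_add_one_left_eq_Ioo]
          exact_mod_cast sum_Ioo_inv_sq_le (α := ℝ) s (m+1)
      _ = 8*(m:ℝ)^2/((s:ℝ)+1) := by ring
  have hfin1 : Real.pi^2 * (s:ℝ)^3 ≤ Real.pi^2 * m * Real.sqrt m := by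
    have : (s:ℝ)^3 ≤ m * Real.sqrt m := by
      calc (s:ℝ)^3 = (s:ℝ)^2 * s := by ring
        _ ≤ m * Real.sqrt m := by
            apply mul_le_mul hs2 hss (by positivity) (by positivity)
    nlinarith [sq_nonneg Real.pi]
  have hfin2 : 8*(m:ℝ)^2/((s:ℝ)+1) ≤ 8 * m * Real.sqrt m := by
    have hsq0 : 0 < Real.sqrt m := Real.sqrt_pos.mpr (by exact_mod_cast hm)
    have h1 : 8*(m:ℝ)^2/((s:ℝ)+1) ≤ 8*(m:ℝ)^2/Real.sqrt m :=
      div_le_div_of_nonneg_left (by positivity) hsq0 hsucc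
    have h2 : 8*(m:ℝ)^2/Real.sqrt m = 8 * m * Real.sqrt m := by
      rw [div_eq_iff hsq0.ne']
      have h3 : Real.sqrt m * Real.sqrt m = m := Real.mul_self_sqrt (by positivity)
      nlinarith [h3]
    linarith
  calc _ ≤ Real.pi^2 * (s:ℝ)^3 + 8*(m:ℝ)^2/((s:ℝ)+1) := add_le_add hlow hhigh
    _ ≤ Real.pi^2 * m * Real.sqrt m + 8 * m * Real.sqrt m := add_le_add hfin1 hfin2
    _ = (Real.pi^2 + 8) * m * Real.sqrt m := by ring

private def EE (m : ℕ) : ℝ :=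
  ∑ k ∈ range m, Real.sin (Real.pi*(2*k+1)^2/(4*m))^2 / Real.sin (Real.pi*(2*k+1)/(4*m))^2

private lemma EE_nonneg (m : ℕ) : 0 ≤ EE m := by
  apply Finset.sum_nonneg
  intro k _
  positivity

private lemma split_sum (m : ℕ) (hm : 0 < m) :
    ∑ k ∈ range m,
        Real.cos (Real.pi * (2*k+1)^2 / (4*m)) ^ 2 / Real.sin (Real.pi * (2*k+1) / (4*m)) ^ 2
      = 2*(m:ℝ)^2 - EE m := by
  have hterm : ∀ k ∈ range m,
      Real.cos (Real.pi * (2*k+1)^2 / (4*m)) ^ 2 / Real.sin (Real.pi * (2*k+1) / (4*m)) ^ 2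
        = (1 / Real.sin (Real.pi*(2*k+1)/(4*m)))^2
          - Real.sin (Real.pi*(2*k+1)^2/(4*m))^2 / Real.sin (Real.pi*(2*k+1)/(4*m))^2 := by
    intro k _
    rw [Real.cos_sq', sub_div, div_pow, one_pow]
  rw [Finset.sum_congr rfl hterm, Finset.sum_sub_distrib, csc_sum_half m hm, EE]


end CosSumAux

/-- the limit of (1/m^2) * sum over v=1..m of
(cos(pi (2v-1)^2/(4m)) / cos(pi (2v-1)/(4m)))^2 is 2. -/
theorem cos_sum_tendsto :
    Tendsto (fun m : ℕ => 1 / (m : ℝ) ^ 2 *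
        ∑ v ∈ Finset.Icc 1 m,
          (Real.cos (Real.pi * (2 * v - 1) ^ 2 / (4 * m)) /
            Real.cos (Real.pi * (2 * v - 1) / (4 * m))) ^ 2)
      atTop (𝓝 2) := by
  have hsq : Tendsto (fun m : ℕ => Real.sqrt m) atTop atTop := by
    have h1 : Tendsto Real.sqrt atTop atTop := by
      rw [show Real.sqrt = fun x : ℝ => x ^ ((1:ℝ)/2) from funext fun x => Real.sqrt_eq_rpow x]
      exact tendsto_rpow_atTop (by norm_num)
    exact h1.comp tendsto_natCast_atTop_atTop
  have hz : Tendsto (fun m : ℕ => (Real.pi^2+8)/Real.sqrt m) atTop (𝓝 0) :=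
    Tendsto.div_atTop tendsto_const_nhds hsq
  have hg : Tendsto (fun m : ℕ => 2 - (Real.pi^2+8)/Real.sqrt m) atTop (𝓝 2) := by
    simpa using (tendsto_const_nhds (x := (2:ℝ)) (f := atTop)).sub hz
  apply tendsto_of_tendsto_of_tendsto_of_le_of_le' hg
    (tendsto_const_nhds (x := (2:ℝ)) (f := atTop))
  · filter_upwards [eventually_ge_atTop 1] with m hm
    have hm0 : 0 < m := hm
    have hm' : (0:ℝ) < (m:ℝ) := by exact_mod_cast hm0
    have hsq0 : 0 < Real.sqrt m := Real.sqrt_pos.mpr hm'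
    rw [main_sum_eq m hm0, split_sum m hm0]
    have hEE : EE m / (m:ℝ)^2 ≤ (Real.pi^2+8)/Real.sqrt m := by
      have h1 : EE m ≤ (Real.pi^2+8) * m * Real.sqrt m := Em_le m hm0
      have h2 : (Real.pi^2+8) * m * Real.sqrt m / (m:ℝ)^2 = (Real.pi^2+8)/Real.sqrt m := by
        rw [div_eq_div_iff (by positivity : ((m:ℝ)^2) ≠ 0) hsq0.ne']
        have h3 : Real.sqrt m * Real.sqrt m = m := Real.mul_self_sqrt hm'.le
        linear_combination (Real.pi^2+8)*(m:ℝ)*h3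
      rw [← h2]
      exact div_le_div_of_nonneg_right h1 (by positivity)
    have heq : 1/(m:ℝ)^2 * (2*(m:ℝ)^2 - EE m) = 2 - EE m/(m:ℝ)^2 := by
      field_simp
    rw [heq]
    linarith
  · filter_upwards [eventually_ge_atTop 1] with m hm
    have hm0 : 0 < m := hm
    have hm' : (0:ℝ) < (m:ℝ) := by exact_mod_cast hm0
    rw [main_sum_eq m hm0, split_sum m hm0]
    have heq : 1/(m:ℝ)^2 * (2*(m:ℝ)^2 - EE m) = 2 - EE m/(m:ℝ)^2 := by
      field_simp
    rw [heq]
    have := EE_nonneg m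
    have : 0 ≤ EE m/(m:ℝ)^2 := by positivity
    linarith
end
end

section
/- The limit as m tends to infinity of (1/m²) · Σ_{u=1}^{m} ( sin(π m u²/(2m+1)) / sin(π m u/(2m+1)) )² equals 0. -/
open Complex Real Filter Topology

noncomputable section

lemma abs_sin_nat_mul_le (n : ℕ) (x : ℝ) : |Real.sin (n * x)| ≤ n * |Real.sin x| := by
  induction n with
  | zero => simp
  | succ n ih =>
    have h : ((n:ℝ)+1) * x = n*x + x := by ring
    rw [Nat.cast_succ, h, Real.sin_add]
    have h1 : |Real.sin (n*x) * Real.cos x| ≤ (n:ℝ) * |Real.sin x| := by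
      rw [abs_mul]
      calc |Real.sin (n*x)| * |Real.cos x| ≤ ((n:ℝ) * |Real.sin x|) * 1 := by
            exact mul_le_mul ih (Real.abs_cos_le_one x) (abs_nonneg _) (by positivity)
        _ = (n:ℝ) * |Real.sin x| := by ring
    have h2 : |Real.cos (n*x) * Real.sin x| ≤ |Real.sin x| := by
      rw [abs_mul]
      calc |Real.cos (n*x)| * |Real.sin x| ≤ 1 * |Real.sin x| := by
            gcongr; exact Real.abs_cos_le_one _
        _ = |Real.sin x| := by ring
    calc |Real.sin (n*x) * Real.cos x + Real.cos (n*x) * Real.sin x|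
        ≤ |Real.sin (n*x) * Real.cos x| + |Real.cos (n*x) * Real.sin x| := abs_add_le _ _
      _ ≤ (n:ℝ) * |Real.sin x| + |Real.sin x| := add_le_add h1 h2
      _ = ((n:ℝ)+1) * |Real.sin x| := by ring

lemma term_bounds (m u : ℕ) (hu1 : 1 ≤ u) (hum : u ≤ m) :
    (Real.sin (Real.pi * m * u ^ 2 / (2 * m + 1)) /
        Real.sin (Real.pi * m * u / (2 * m + 1))) ^ 2 ≤ (u:ℝ)^2 ∧
    (Real.sin (Real.pi * m * u ^ 2 / (2 * m + 1)) /
        Real.sin (Real.pi * m * u / (2 * m + 1))) ^ 2 ≤ ((2*(m:ℝ)+1)/u)^2 := by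
  have hM : (0:ℝ) < 2*(m:ℝ)+1 := by positivity
  have hu : (1:ℝ) ≤ (u:ℝ) := by exact_mod_cast hu1
  have hupos : (0:ℝ) < u := by linarith
  set M : ℝ := 2*(m:ℝ)+1 with hMdef
  set θ : ℝ := Real.pi * m * u / M with hθ
  set x : ℝ := Real.pi * u / M with hx
  have hxpos : 0 < x := by
    have := Real.pi_pos; rw [hx]; positivity
  have hxle : x ≤ Real.pi / 2 := by
    rw [hx, div_le_div_iff₀ hM (by norm_num)]
    have hum' : (u:ℝ) ≤ (m:ℝ) := by exact_mod_cast hum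
    nlinarith [Real.pi_pos]
  -- sin x ≥ 2u/M
  have hsinx : 2*(u:ℝ)/M ≤ Real.sin x := by
    have h := Real.mul_abs_le_abs_sin (x := x) (by rw [abs_of_pos hxpos]; exact hxle)
    rw [abs_of_pos hxpos, abs_of_pos (Real.sin_pos_of_pos_of_lt_pi hxpos
      (lt_of_le_of_lt hxle (by linarith [Real.pi_pos])))] at h
    calc 2*(u:ℝ)/M = 2/Real.pi * x := by rw [hx]; field_simp
      _ ≤ Real.sin x := h
  -- 2θ = uπ - x
  have h2θ : 2*θ = (u:ℕ) * Real.pi - x := by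
    rw [hθ, hx, hMdef]; field_simp; ring
  have hsin2θ : |Real.sin (2*θ)| = Real.sin x := by
    rw [h2θ, Real.sin_nat_mul_pi_sub, abs_neg, abs_mul, _root_.abs_pow, abs_neg, abs_one,
      one_pow, one_mul, abs_of_pos (Real.sin_pos_of_pos_of_lt_pi hxpos
      (lt_of_le_of_lt hxle (by linarith [Real.pi_pos])))]
  -- |sin θ| ≥ u/M
  have hsinθ : (u:ℝ)/M ≤ |Real.sin θ| := by
    have h1 : |Real.sin (2*θ)| ≤ 2 * |Real.sin θ| := by
      rw [Real.sin_two_mul, abs_mul, abs_mul]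
      calc |2| * |Real.sin θ| * |Real.cos θ| ≤ |2| * |Real.sin θ| * 1 := by
            gcongr; exact Real.abs_cos_le_one θ
        _ = 2 * |Real.sin θ| := by rw [_root_.abs_two]; ring
    rw [hsin2θ] at h1
    have h2 : (2*(u:ℝ))/M = 2*((u:ℝ)/M) := by ring
    rw [h2] at hsinx
    linarith
  have hsinθsq : ((u:ℝ)/M)^2 ≤ Real.sin θ ^ 2 := by
    rw [← _root_.sq_abs (Real.sin θ)]
    exact pow_le_pow_left₀ (by positivity) hsinθ 2
  have hsqpos : 0 < Real.sin θ ^ 2 := lt_of_lt_of_le (by positivity) hsinθsq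
  have hnum : Real.pi * m * u^2 / M = u * θ := by rw [hθ]; field_simp
  have hnumle : Real.sin (Real.pi * m * u^2 / M) ^ 2 ≤ (u:ℝ)^2 * Real.sin θ ^ 2 := by
    rw [hnum]
    have := abs_sin_nat_mul_le u θ
    calc Real.sin ((u:ℝ) * θ) ^ 2 = |Real.sin ((u:ℝ)*θ)|^2 := (_root_.sq_abs _).symm
      _ ≤ ((u:ℝ) * |Real.sin θ|)^2 := pow_le_pow_left₀ (abs_nonneg _) this 2
      _ = (u:ℝ)^2 * Real.sin θ ^2 := by rw [mul_pow, _root_.sq_abs]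
  constructor
  · rw [div_pow, div_le_iff₀ hsqpos]
    exact hnumle
  · rw [div_pow, div_le_iff₀ hsqpos]
    have h1 : Real.sin (Real.pi * m * u^2 / M) ^ 2 ≤ 1 := by
      rw [← _root_.sq_abs]; exact pow_le_one₀ (abs_nonneg _) (Real.abs_sin_le_one _)
    calc Real.sin (Real.pi * m * u^2 / M) ^ 2 ≤ 1 := h1
      _ ≤ (M/u)^2 * ((u:ℝ)/M)^2 := by
          rw [div_pow, div_pow, div_mul_div_comm]
          rw [le_div_iff₀ (by positivity)]
          ring_nf; exact le_refl _
      _ ≤ (M/u)^2 * Real.sin θ ^ 2 := by gcongr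

lemma sqrt_tendsto : Tendsto (fun m : ℕ => Nat.sqrt m) atTop atTop := by
  apply tendsto_atTop_atTop.2
  intro b
  exact ⟨b*b, fun a ha => Nat.le_sqrt.2 (le_trans (by nlinarith) ha)⟩

/-- the limit of (1/m^2) * sum over u=1..m of
(sin(pi m u^2/(2m+1)) / sin(pi m u/(2m+1)))^2 is 0. -/
theorem sin_sum_tendsto_zero :
    Tendsto (fun m : ℕ => 1 / (m : ℝ) ^ 2 *
        ∑ u ∈ Finset.Icc 1 m,
          (Real.sin (Real.pi * m * u ^ 2 / (2 * m + 1)) /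
            Real.sin (Real.pi * m * u / (2 * m + 1))) ^ 2)
      atTop (𝓝 0) := by

  have hg : Tendsto (fun m : ℕ => 20 / (Nat.sqrt m : ℝ)) atTop (𝓝 0) :=
    (tendsto_const_div_atTop_nhds_zero_nat 20).comp sqrt_tendsto
  apply tendsto_of_tendsto_of_tendsto_of_le_of_le' tendsto_const_nhds hg
  · filter_upwards with m
    positivity
  · filter_upwards [eventually_ge_atTop 4] with m hm4
    set K := Nat.sqrt m with hK
    have hK1 : 1 ≤ K := by
      rw [hK]; exact Nat.le_sqrt.2 (by omega)
    have hK2 : K * K ≤ m := by have h := Nat.sqrt_le' m; rwa [pow_two] at h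
    have hKR : (1:ℝ) ≤ K := by exact_mod_cast hK1
    have hKpos : (0:ℝ) < K := by linarith
    have hm1 : (1:ℝ) ≤ m := by exact_mod_cast (by omega : 1 ≤ m)
    have hmpos : (0:ℝ) < m := by linarith
    set f : ℕ → ℝ := fun u =>
      (Real.sin (Real.pi * m * u ^ 2 / (2 * m + 1)) /
        Real.sin (Real.pi * m * u / (2 * m + 1))) ^ 2 with hf
    have hsplit : ∑ u ∈ Finset.Icc 1 m, f u =
        ∑ u ∈ (Finset.Icc 1 m).filter (fun u => u ≤ K), f u +
        ∑ u ∈ (Finset.Icc 1 m).filter (fun u => ¬ u ≤ K), f u :=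
      (Finset.sum_filter_add_sum_filter_not _ _ _).symm
    have hb1 : ∑ u ∈ (Finset.Icc 1 m).filter (fun u => u ≤ K), f u ≤ (K:ℝ) * m := by
      calc ∑ u ∈ (Finset.Icc 1 m).filter (fun u => u ≤ K), f u
          ≤ ∑ u ∈ (Finset.Icc 1 m).filter (fun u => u ≤ K), (K:ℝ)^2 := by
            apply Finset.sum_le_sum
            intro u hu
            simp only [Finset.mem_filter, Finset.mem_Icc] at hu
            have h := (term_bounds m u hu.1.1 hu.1.2).1
            have : ((u:ℝ))^2 ≤ (K:ℝ)^2 := by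
              have : (u:ℝ) ≤ K := by exact_mod_cast hu.2
              nlinarith [Nat.cast_nonneg (α := ℝ) u]
            exact le_trans h this
        _ ≤ (K:ℝ) * (K:ℝ)^2 := by
            rw [Finset.sum_const, nsmul_eq_mul]
            gcongr
            have hsub : (Finset.Icc 1 m).filter (fun u => u ≤ K) ⊆ Finset.Icc 1 K := by
              intro u hu
              simp only [Finset.mem_filter, Finset.mem_Icc] at hu ⊢
              exact ⟨hu.1.1, hu.2⟩
            have := Finset.card_le_card hsub
            rwa [Nat.card_Icc, Nat.add_sub_cancel] at this
        _ ≤ (K:ℝ) * m := by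
            gcongr
            rw [sq]; exact_mod_cast hK2
    have hb2 : ∑ u ∈ (Finset.Icc 1 m).filter (fun u => ¬ u ≤ K), f u ≤
        (2*(m:ℝ)+1)^2 * (2 / ((K:ℝ)+1)) := by
      calc ∑ u ∈ (Finset.Icc 1 m).filter (fun u => ¬ u ≤ K), f u
          ≤ ∑ u ∈ (Finset.Icc 1 m).filter (fun u => ¬ u ≤ K),
              (2*(m:ℝ)+1)^2 * ((u:ℝ)^2)⁻¹ := by
            apply Finset.sum_le_sum
            intro u hu
            simp only [Finset.mem_filter, Finset.mem_Icc] at hu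
            have h := (term_bounds m u hu.1.1 hu.1.2).2
            have hupos : (0:ℝ) < u := by exact_mod_cast hu.1.1
            calc f u ≤ ((2*(m:ℝ)+1)/u)^2 := h
              _ = (2*(m:ℝ)+1)^2 * ((u:ℝ)^2)⁻¹ := by
                  rw [div_pow]; rw [div_eq_mul_inv]
        _ ≤ ∑ u ∈ Finset.Ioo K (m+1), (2*(m:ℝ)+1)^2 * ((u:ℝ)^2)⁻¹ := by
            apply Finset.sum_le_sum_of_subset_of_nonneg
            · intro u hu
              simp only [Finset.mem_filter, Finset.mem_Icc, Finset.mem_Ioo] at hu ⊢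
              omega
            · intro u _ _; positivity
        _ = (2*(m:ℝ)+1)^2 * ∑ u ∈ Finset.Ioo K (m+1), ((u:ℝ)^2)⁻¹ := by
            rw [Finset.mul_sum]
        _ ≤ (2*(m:ℝ)+1)^2 * (2 / ((K:ℝ)+1)) := by
            gcongr
            have := sum_Ioo_inv_sq_le (α := ℝ) K (m+1)
            simpa using this
    have hM2 : (2*(m:ℝ)+1)^2 ≤ 9 * (m:ℝ)^2 := by nlinarith
    have hKm : (K:ℝ) / (m:ℝ) ≤ 1 / K := by
      rw [div_le_div_iff₀ hmpos hKpos]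
      have : (K:ℝ) * K ≤ m := by exact_mod_cast hK2
      linarith
    calc (1:ℝ) / (m:ℝ)^2 * ∑ u ∈ Finset.Icc 1 m, f u
        ≤ 1 / (m:ℝ)^2 * ((K:ℝ) * m + (2*(m:ℝ)+1)^2 * (2 / ((K:ℝ)+1))) := by
          rw [hsplit]; gcongr
      _ ≤ 1 / (m:ℝ)^2 * ((K:ℝ) * m + 9*(m:ℝ)^2 * (2 / (K:ℝ))) := by
          gcongr
          linarith
      _ = (K:ℝ)/m + 18 / K := by field_simp; ring
      _ ≤ 1/K + 18/K := by gcongr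
      _ ≤ 20 / (K:ℝ) := by
          rw [← add_div]
          gcongr
          norm_num
end
end

section
/- For every positive integer m, the autocorrelation demerit factors of the Chu sequences of length 4m+2 with parameters 2m+2 and 2m are equal: ADF(Z_{4m+2}^{(2m+2)}) = ADF(Z_{4m+2}^{(2m)}). -/
open Complex Real Filter Topology

noncomputable section

lemma phase_mul_conj_phase (j u : ℤ) :
    Complex.exp (Real.pi * Complex.I * (j : ℂ) ^ 2) *
      (starRingEnd ℂ) (Complex.exp (Real.pi * Complex.I * ((j + u : ℤ) : ℂ) ^ 2)) =
      Complex.exp (-(Real.pi * Complex.I * (u : ℂ) ^ 2)) := by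
  rw [← Complex.exp_conj, ← Complex.exp_add]
  have h1 : (starRingEnd ℂ) (Real.pi * Complex.I * ((j + u : ℤ) : ℂ) ^ 2) =
      -(Real.pi * Complex.I * ((j + u : ℤ) : ℂ) ^ 2) := by
    simp [map_mul, Complex.conj_I]
  rw [h1]
  have h2 : Real.pi * Complex.I * (j : ℂ) ^ 2 +
      -(Real.pi * Complex.I * ((j + u : ℤ) : ℂ) ^ 2) =
      -(Real.pi * Complex.I * (u : ℂ) ^ 2) + ((-(j * u) : ℤ) : ℂ) * (2 * Real.pi * Complex.I) := by
    push_cast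
    ring
  rw [h2, Complex.exp_add, Complex.exp_int_mul_two_pi_mul_I, mul_one]

lemma corr_abs_eq (n : ℕ) (A B : ℤ → ℂ)
    (h : ∀ j : ℤ, B j = Complex.exp (Real.pi * Complex.I * (j : ℂ) ^ 2) * (starRingEnd ℂ) (A j))
    (u : ℤ) : ‖corr n B B u‖ = ‖corr n A A u‖ := by
  have hext : ∀ j : ℤ, seqExt n B j =
      Complex.exp (Real.pi * Complex.I * (j : ℂ) ^ 2) * (starRingEnd ℂ) (seqExt n A j) := by
    intro j
    unfold seqExt
    split <;> simp [h]
  have key : corr n B B u =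
      Complex.exp (-(Real.pi * Complex.I * (u : ℂ) ^ 2)) * (starRingEnd ℂ) (corr n A A u) := by
    unfold corr
    rw [map_sum, Finset.mul_sum]
    apply Finset.sum_congr rfl
    intro j _
    rw [hext j, hext (j + u), map_mul, Complex.conj_conj, ← phase_mul_conj_phase j u,
      map_mul, Complex.conj_conj]
    ring
  rw [key, norm_mul, Complex.norm_conj]
  have him : ((u : ℂ) ^ 2).im = 0 := by
    rw [show ((u : ℂ)) ^ 2 = ((u ^ 2 : ℤ) : ℂ) by push_cast; ring, Complex.intCast_im]
  have h1 : ‖Complex.exp (-(Real.pi * Complex.I * (u : ℂ) ^ 2))‖ = 1 := by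
    rw [Complex.norm_exp]
    have : (-(Real.pi * Complex.I * (u : ℂ) ^ 2)).re = 0 := by
      simp [Complex.mul_re, Complex.mul_im, him]
    rw [this, Real.exp_zero]
  rw [h1, one_mul]

/-- ADF(Z_(4m+2)^(2m+2)) = ADF(Z_(4m+2)^(2m)) for every positive integer m. -/
theorem adf_chu_odd_case_eq (m : ℕ) (hm : 0 < m) :
    adf (4 * m + 2) (chu (4 * m + 2) (2 * (m : ℤ) + 2)) =
      adf (4 * m + 2) (chu (4 * m + 2) (2 * (m : ℤ))) := by
  have hn : ((4 * m + 2 : ℕ) : ℂ) ≠ 0 := Nat.cast_ne_zero.mpr (by omega)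
  have h : ∀ j : ℤ, chu (4 * m + 2) (2 * (m : ℤ)) j =
      Complex.exp (Real.pi * Complex.I * (j : ℂ) ^ 2) *
        (starRingEnd ℂ) (chu (4 * m + 2) (2 * (m : ℤ) + 2) j) := by
    intro j
    unfold chu
    rw [← Complex.exp_conj, ← Complex.exp_add]
    congr 1
    have hc : (starRingEnd ℂ) (Real.pi * Complex.I * ((2 * (m : ℤ) + 2 : ℤ) : ℂ) * (j : ℂ) ^ 2 /
        ((4 * m + 2 : ℕ) : ℂ)) =
        -(Real.pi * Complex.I * ((2 * (m : ℤ) + 2 : ℤ) : ℂ) * (j : ℂ) ^ 2 /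
          ((4 * m + 2 : ℕ) : ℂ)) := by
      simp only [map_div₀, map_mul, map_pow, Complex.conj_ofReal, Complex.conj_I,
        map_intCast, map_natCast]
      ring
    rw [hc, ← sub_eq_add_neg, sub_div' hn, div_eq_div_iff hn hn]
    push_cast
    ring
  have habs := corr_abs_eq (4 * m + 2) (chu (4 * m + 2) (2 * (m : ℤ) + 2))
    (chu (4 * m + 2) (2 * (m : ℤ))) h
  simp only [adf, habs]
end
end
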